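/- arXiv:1507.07381 — 8 statements merged into one kernel-verified Lean document; each statement's English description precedes it below -/
import Mathlib

section
/- Let H be a graph with at least one edge and let k be its degeneracy. Then AR(H) ≤ k·e(H) − k + v(H); that is, every proper edge colouring of the complete graph on k·e(H) − k + v(H) vertices yields a rainbow copy of H. -/
open SimpleGraph

/-- A proper edge colouring: edges sharing a vertex receive distinct colours. -/
def IsProperEdgeColoring {V α : Type*} (G : SimpleGraph V) (c : Sym2 V → α) : Prop :=
  ∀ e₁ ∈ G.edgeSet, ∀ e₂ ∈ G.edgeSet, e₁ ≠ e₂ → (∃ v, v ∈ e₁ ∧ v ∈ e₂) → c e₁ ≠ c e₂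

/-- The edge-coloured graph `(G, c)` contains a rainbow copy of `H`. -/
def HasRainbowCopy {V W α : Type*} (G : SimpleGraph V) (c : Sym2 V → α)
    (H : SimpleGraph W) : Prop :=
  ∃ f : W ↪ V, (∀ u v, H.Adj u v → G.Adj (f u) (f v)) ∧
    ∀ u v x y, H.Adj u v → H.Adj x y → s(u, v) ≠ s(x, y) →
      c s(f u, f v) ≠ c s(f x, f y)

/-- Every proper edge colouring of `G` yields a rainbow copy of `H`. -/
def ForcesRainbow {V W : Type*} (G : SimpleGraph V) (H : SimpleGraph W) : Prop :=
  ∀ c : Sym2 V → ℕ, IsProperEdgeColoring G c → HasRainbowCopy G c H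

/-- The maximum degree of `G` is at most `k`. -/
def MaxDegreeLE {V : Type*} (G : SimpleGraph V) (k : ℕ) : Prop :=
  ∀ v, (G.neighborSet v).ncard ≤ k

/-- `k` is the degree anti-Ramsey number of `H`: the smallest `k` for which some
graph with maximum degree at most `k` forces a rainbow copy of `H` under any
proper edge colouring. -/
def DegreeAntiRamsey {W : Type*} (H : SimpleGraph W) (k : ℕ) : Prop :=
  (∃ (n : ℕ) (G : SimpleGraph (Fin n)), MaxDegreeLE G k ∧ ForcesRainbow G H) ∧
  ∀ m : ℕ, (∃ (n : ℕ) (G : SimpleGraph (Fin n)), MaxDegreeLE G m ∧ ForcesRainbow G H) → k ≤ m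

/-- `H` is `d`-degenerate: every non-empty (induced) subgraph has a vertex of
degree at most `d` within it. -/
def DegenLE {V : Type*} (H : SimpleGraph V) (d : ℕ) : Prop :=
  ∀ s : Set V, s.Nonempty → ∃ v ∈ s, (H.neighborSet v ∩ s).ncard ≤ d

/-- `k` is the degeneracy of `H`: the smallest `d` such that `H` is `d`-degenerate. -/
def IsDegeneracy {V : Type*} (H : SimpleGraph V) (k : ℕ) : Prop :=
  DegenLE H k ∧ ∀ d : ℕ, DegenLE H d → k ≤ d

open Finset in
lemma key_lemma {V : Type} [Fintype V] [DecidableEq V] (H : SimpleGraph V) [DecidableRel H.Adj]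
    (k n : ℕ) (hdeg : DegenLE H k)
    (hn : Fintype.card V - 1 + k * (H.edgeFinset.card - 1) < n)
    (c : Sym2 (Fin n) → ℕ) (hc : IsProperEdgeColoring (⊤ : SimpleGraph (Fin n)) c)
    (s : Finset V) :
    ∃ f : V → Fin n, Set.InjOn f ↑s ∧
      ∀ a b p q, a ∈ s → b ∈ s → p ∈ s → q ∈ s → H.Adj a b → H.Adj p q →
        s(a,b) ≠ s(p,q) → c s(f a, f b) ≠ c s(f p, f q) := by
  have hn0 : 0 < n := by omega
  have hcc : ∀ (a b b' : Fin n), a ≠ b → a ≠ b' → b ≠ b' → c s(a,b) ≠ c s(a,b') := by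
    intro a b b' h1 h2 h3
    refine hc _ (by simp [h1]) _ (by simp [h2]) ?_ ⟨a, by simp, by simp⟩
    simp only [ne_eq, Sym2.eq_iff]
    rintro (⟨-, rfl⟩ | ⟨rfl, rfl⟩)
    · exact h3 rfl
    · exact h2 rfl
  induction s using Finset.strongInduction with
  | _ s ih =>
  rcases s.eq_empty_or_nonempty with rfl | hs
  · exact ⟨fun _ => ⟨0, hn0⟩, by simp, by simp⟩
  obtain ⟨v, hv, hvdeg⟩ := hdeg ↑s (Finset.coe_nonempty.2 hs)
  have hvs : v ∈ s := hv
  set s' := s.erase v with hs'def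
  obtain ⟨f, hfi, hfr⟩ := ih s' (Finset.erase_ssubset hvs)
  set Nv := s'.filter (fun u => H.Adj v u) with hNvdef
  have hNvs' : ∀ u ∈ Nv, u ∈ s' := fun u hu => Finset.mem_of_mem_filter u hu
  have hNvadj : ∀ u ∈ Nv, H.Adj v u := fun u hu => (Finset.mem_filter.mp hu).2
  have hNd : Nv.card ≤ k := by
    have hset : H.neighborSet v ∩ ↑s = ↑Nv := by
      ext u
      simp only [Set.mem_inter_iff, SimpleGraph.mem_neighborSet, Finset.mem_coe, hNvdef,
        Finset.mem_filter, hs'def, Finset.mem_erase]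
      constructor
      · rintro ⟨h1, h2⟩; exact ⟨⟨fun h => H.irrefl (h ▸ h1), h2⟩, h1⟩
      · rintro ⟨⟨-, h2⟩, h3⟩; exact ⟨h3, h2⟩
    rw [hset, Set.ncard_coe_finset] at hvdeg
    exact hvdeg
  set Es := H.edgeFinset ∩ s'.sym2 with hEsdef
  have hEsmem : ∀ p q, p ∈ s' → q ∈ s' → H.Adj p q → s(p,q) ∈ Es := by
    intro p q hp hq hpq
    refine Finset.mem_inter.mpr ⟨SimpleGraph.mem_edgeFinset.mpr hpq, Finset.mem_sym2_iff.mpr ?_⟩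
    intro y hy
    rcases Sym2.mem_iff.mp hy with rfl | rfl <;> assumption
  have hEs : Es.card + Nv.card ≤ H.edgeFinset.card := by
    set Iv := Nv.image (fun u => s(v,u)) with hIvdef
    have hnotv : ∀ u ∈ Nv, u ≠ v := fun u hu => Finset.ne_of_mem_erase (hNvs' u hu)
    have hIvcard : Iv.card = Nv.card := by
      apply Finset.card_image_of_injOn
      intro u1 h1 u2 h2 he
      rcases Sym2.eq_iff.mp he with ⟨-, h⟩ | ⟨h, h'⟩
      · exact h
      · exact absurd h' (hnotv u1 h1)
    have hdisj : Disjoint Es Iv := by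
      rw [Finset.disjoint_right]
      intro e heI heE
      obtain ⟨u, hu, rfl⟩ := Finset.mem_image.mp heI
      have := Finset.mem_sym2_iff.mp (Finset.mem_inter.mp heE).2 v (by simp)
      exact Finset.notMem_erase v s this
    have hsub : Es ∪ Iv ⊆ H.edgeFinset := by
      apply Finset.union_subset (Finset.inter_subset_left)
      intro e he
      obtain ⟨u, hu, rfl⟩ := Finset.mem_image.mp he
      exact SimpleGraph.mem_edgeFinset.mpr (hNvadj u hu)
    calc Es.card + Nv.card = (Es ∪ Iv).card := by
          rw [Finset.card_union_of_disjoint hdisj, hIvcard]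
      _ ≤ _ := Finset.card_le_card hsub
  set badP : V × Sym2 V → Finset (Fin n) :=
    fun p => Finset.univ.filter (fun w => w ≠ f p.1 ∧ c s(f p.1, w) = c (p.2.map f)) with hbadPdef
  have hbad1 : ∀ p, (badP p).card ≤ 1 := by
    intro p
    rw [Finset.card_le_one]
    intro w1 h1 w2 h2
    simp only [hbadPdef, Finset.mem_filter, Finset.mem_univ, true_and] at h1 h2
    by_contra hne
    exact hcc (f p.1) w1 w2 (Ne.symm h1.1) (Ne.symm h2.1) hne (h1.2.trans h2.2.symm)
  set B := s'.image f ∪ (Nv ×ˢ Es).biUnion badP with hBdef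
  have hBcard : B.card < n := by
    have h1 : (s'.image f).card ≤ Fintype.card V - 1 := by
      calc (s'.image f).card ≤ s'.card := Finset.card_image_le
        _ = s.card - 1 := Finset.card_erase_of_mem hvs
        _ ≤ Fintype.card V - 1 := by
            have := Finset.card_le_univ s
            omega
    have h2 : ((Nv ×ˢ Es).biUnion badP).card ≤ Nv.card * Es.card := by
      calc ((Nv ×ˢ Es).biUnion badP).card ≤ ∑ p ∈ Nv ×ˢ Es, (badP p).card :=
            Finset.card_biUnion_le
        _ ≤ ∑ _p ∈ Nv ×ˢ Es, 1 := Finset.sum_le_sum (fun p _ => hbad1 p)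
        _ = (Nv ×ˢ Es).card := by simp
        _ = Nv.card * Es.card := Finset.card_product Nv Es
    have h3 : Nv.card * Es.card ≤ k * (H.edgeFinset.card - 1) := by
      rcases Nat.eq_zero_or_pos Nv.card with h | h
      · simp [h]
      · exact Nat.mul_le_mul hNd (by omega)
    have h4 := Finset.card_union_le (s'.image f) ((Nv ×ˢ Es).biUnion badP)
    rw [hBdef]
    omega
  have hex : ∃ w : Fin n, w ∉ B := by
    by_contra h
    push_neg at h
    have : (Finset.univ : Finset (Fin n)).card ≤ B.card :=
      Finset.card_le_card (fun w _ => h w)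
    rw [Finset.card_univ, Fintype.card_fin] at this
    omega
  obtain ⟨w, hw⟩ := hex
  set g := Function.update f v w with hgdef
  have hgv : g v = w := Function.update_self v w f
  have hgu : ∀ u ∈ s', g u = f u := fun u hu =>
    Function.update_of_ne (Finset.ne_of_mem_erase hu) w f
  have hwim : ∀ u ∈ s', w ≠ f u := by
    intro u hu h
    exact hw (Finset.mem_union_left _ (Finset.mem_image.mpr ⟨u, hu, h.symm⟩))
  have NEWOLD : ∀ u ∈ Nv, ∀ p q, p ∈ s' → q ∈ s' → H.Adj p q →
      c s(w, f u) ≠ c s(f p, f q) := by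
    intro u hu p q hp hq hpq
    have hmem : (u, s(p,q)) ∈ Nv ×ˢ Es :=
      Finset.mem_product.mpr ⟨hu, hEsmem p q hp hq hpq⟩
    have hwb : w ∉ badP (u, s(p,q)) := fun hb =>
      hw (Finset.mem_union_right _ (Finset.mem_biUnion.mpr ⟨_, hmem, hb⟩))
    simp only [hbadPdef, Finset.mem_filter, Finset.mem_univ, true_and, not_and,
      Sym2.map_pair_eq] at hwb
    have := hwb (hwim u (hNvs' u hu))
    rw [Sym2.eq_swap] at this
    exact this
  have NEWNEW : ∀ u1 u2, u1 ∈ Nv → u2 ∈ Nv → u1 ≠ u2 →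
      c s(w, f u1) ≠ c s(w, f u2) := by
    intro u1 u2 h1 h2 hne
    refine hcc w (f u1) (f u2) (hwim u1 (hNvs' u1 h1)) (hwim u2 (hNvs' u2 h2)) ?_
    intro h
    exact hne (hfi (hNvs' u1 h1) (hNvs' u2 h2) h)
  have edgecase : ∀ a b, a ∈ s → b ∈ s → H.Adj a b →
      (a ∈ s' ∧ b ∈ s' ∧ s(g a, g b) = s(f a, f b)) ∨
      (∃ u ∈ Nv, s(a,b) = s(v,u) ∧ s(g a, g b) = s(w, f u)) := by
    intro a b ha hb hab
    by_cases hav : a = v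
    · subst hav
      have hbv : b ≠ a := hab.ne'
      have hb' : b ∈ s' := Finset.mem_erase.mpr ⟨hbv, hb⟩
      refine Or.inr ⟨b, Finset.mem_filter.mpr ⟨hb', hab⟩, rfl, ?_⟩
      rw [hgv, hgu b hb']
    · by_cases hbv : b = v
      · subst hbv
        have ha' : a ∈ s' := Finset.mem_erase.mpr ⟨hav, ha⟩
        refine Or.inr ⟨a, Finset.mem_filter.mpr ⟨ha', hab.symm⟩, Sym2.eq_swap, ?_⟩
        rw [hgv, hgu a ha', Sym2.eq_swap]
      · have ha' : a ∈ s' := Finset.mem_erase.mpr ⟨hav, ha⟩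
        have hb' : b ∈ s' := Finset.mem_erase.mpr ⟨hbv, hb⟩
        exact Or.inl ⟨ha', hb', by rw [hgu a ha', hgu b hb']⟩
  refine ⟨g, ?_, ?_⟩
  · intro a ha b hb hab
    simp only [Finset.mem_coe] at ha hb
    by_cases hav : a = v <;> by_cases hbv : b = v
    · rw [hav, hbv]
    · exfalso
      rw [hav, hgv, hgu b (Finset.mem_erase.mpr ⟨hbv, hb⟩)] at hab
      exact hwim b (Finset.mem_erase.mpr ⟨hbv, hb⟩) hab
    · exfalso
      rw [hbv, hgv, hgu a (Finset.mem_erase.mpr ⟨hav, ha⟩)] at hab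
      exact hwim a (Finset.mem_erase.mpr ⟨hav, ha⟩) hab.symm
    · have ha' : a ∈ s' := Finset.mem_erase.mpr ⟨hav, ha⟩
      have hb' : b ∈ s' := Finset.mem_erase.mpr ⟨hbv, hb⟩
      rw [hgu a ha', hgu b hb'] at hab
      exact hfi ha' hb' hab
  · intro a b p q has hbs hps hqs hab hpq hne
    rcases edgecase a b has hbs hab with ⟨ha', hb', hrw1⟩ | ⟨u1, hu1, hse1, hrw1⟩ <;>
      rcases edgecase p q hps hqs hpq with ⟨hp', hq', hrw2⟩ | ⟨u2, hu2, hse2, hrw2⟩ <;>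
      rw [hrw1, hrw2]
    · exact hfr a b p q ha' hb' hp' hq' hab hpq hne
    · exact (NEWOLD u2 hu2 a b ha' hb' hab).symm
    · exact NEWOLD u1 hu1 p q hp' hq' hpq
    · refine NEWNEW u1 u2 hu1 hu2 ?_
      intro h
      exact hne (by rw [hse1, hse2, h])

theorem stmt_0 {V : Type} [Fintype V] (H : SimpleGraph V) (hE : H.edgeSet.Nonempty)
    (k : ℕ) (hk : IsDegeneracy H k) :
    ForcesRainbow
      (⊤ : SimpleGraph (Fin (k * H.edgeSet.ncard - k + Fintype.card V))) H := by
  classical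
  intro c hc
  obtain ⟨e, he⟩ := hE
  induction e using Sym2.ind with
  | _ x y =>
  have hxy : H.Adj x y := he
  have hxyne : x ≠ y := hxy.ne
  have hk1 : 1 ≤ k := by
    obtain ⟨v', hv', hd⟩ := hk.1 {x, y} ⟨x, by simp⟩
    have hne : (H.neighborSet v' ∩ {x, y}).Nonempty := by
      rcases hv' with rfl | rfl
      · exact ⟨y, hxy, by simp⟩
      · exact ⟨x, hxy.symm, by simp⟩
    have := (Set.ncard_pos (Set.toFinite _)).mpr hne
    omega
  have hE1 : 1 ≤ H.edgeSet.ncard :=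
    (Set.ncard_pos (Set.toFinite _)).mpr ⟨_, he⟩
  have hV1 : 1 ≤ Fintype.card V := Fintype.card_pos_iff.mpr ⟨x⟩
  have hEcard : H.edgeSet.ncard = H.edgeFinset.card := by
    simp [Set.ncard_eq_toFinset_card', SimpleGraph.edgeFinset]
  have hn : Fintype.card V - 1 + k * (H.edgeFinset.card - 1) <
      k * H.edgeSet.ncard - k + Fintype.card V := by
    obtain ⟨E', hE'⟩ : ∃ E', H.edgeSet.ncard = E' + 1 :=
      ⟨_, (Nat.succ_pred_eq_of_pos hE1).symm⟩
    have h2 : H.edgeFinset.card - 1 = E' := by omega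
    rw [h2, hE', Nat.mul_succ]
    omega
  obtain ⟨f, hfi, hfr⟩ := key_lemma H k _ hk.1 hn c hc Finset.univ
  have hfinj : Function.Injective f := fun a b h => hfi (by simp) (by simp) h
  refine ⟨⟨f, hfinj⟩, ?_, ?_⟩
  · intro u v huv
    simp only [Function.Embedding.coeFn_mk, SimpleGraph.top_adj]
    exact fun h => huv.ne (hfinj h)
  · intro u v x' y' h1 h2 hne
    exact hfr u v x' y' (by simp) (by simp) (by simp) (by simp) h1 h2 hne
end

section
/- Let H be a graph with at least one edge and let k be its degeneracy. Then AR_d(H) ≤ k·e(H) − k + v(H) − 1; that is, there exists a graph G with maximum degree at most k·e(H) − k + v(H) − 1 (namely the complete graph on k·e(H) − k + v(H) vertices) such that every proper edge colouring of G yields a rainbow copy of H. -/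
open SimpleGraph

lemma exists_degen_list {V : Type} [Fintype V] [DecidableEq V] (H : SimpleGraph V)
    [DecidableRel H.Adj] (k : ℕ) (hdeg : DegenLE H k) (s : Finset V) :
    ∃ L : List V, L.Nodup ∧ L.toFinset = s ∧
      ∀ i (h : i < L.length), ((H.neighborFinset L[i]) ∩ (L.take i).toFinset).card ≤ k := by
  induction s using Finset.strongInduction with
  | _ s ih =>
    rcases s.eq_empty_or_nonempty with rfl | hs
    · exact ⟨[], by simp⟩
    · obtain ⟨v, hv, hvk⟩ := hdeg ↑s (by exact_mod_cast hs)
      have hvk' : ((H.neighborFinset v) ∩ s).card ≤ k := by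
        rw [SimpleGraph.neighborFinset_def]
        rwa [← Set.ncard_coe_finset, Finset.coe_inter, Set.coe_toFinset]
      have hv' : v ∈ s := by exact_mod_cast hv
      obtain ⟨L', hnd, hfin, hL'⟩ := ih (s.erase v) (Finset.erase_ssubset hv')
      refine ⟨L' ++ [v], ?_, ?_, ?_⟩
      · have : v ∉ L' := by
          intro h; have : v ∈ s.erase v := by rw [← hfin]; simpa using h
          simp at this
        simp [List.nodup_append, hnd, this]; exact fun a ha h => this (h ▸ ha)
      · rw [List.toFinset_append, hfin]
        ext x
        simp only [Finset.mem_union, Finset.mem_erase, List.mem_toFinset, List.mem_singleton]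
        constructor
        · rintro (⟨_, hx⟩ | rfl) <;> [exact hx; exact hv']
        · intro hx; by_cases hxv : x = v
          · exact Or.inr hxv
          · exact Or.inl ⟨hxv, hx⟩
      · intro i h
        rcases lt_or_eq_of_le (Nat.lt_succ_iff.mp (by simpa using h)) with hi | hi
        · have h1 : (L' ++ [v])[i] = L'[i] := List.getElem_append_left hi
          have h2 : (L' ++ [v]).take i = L'.take i := List.take_append_of_le_length hi.le
          rw [h1, h2]; exact hL' i hi
        · subst hi
          have h1 : (L' ++ [v])[L'.length] = v :=
            List.getElem_concat_length rfl (by simp)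
          have h2 : (L' ++ [v]).take L'.length = L' := List.take_left
          rw [h1, h2]
          calc ((H.neighborFinset v) ∩ L'.toFinset).card
              ≤ ((H.neighborFinset v) ∩ s).card := by
                apply Finset.card_le_card; rw [hfin]
                exact Finset.inter_subset_inter_left (Finset.erase_subset _ _)
            _ ≤ k := hvk'

lemma colour_fiber_card {n : ℕ} (c : Sym2 (Fin n) → ℕ)
    (hc : IsProperEdgeColoring ⊤ c) (x : Fin n) (S : Finset ℕ) :
    (Finset.univ.filter (fun y => y ≠ x ∧ c s(x, y) ∈ S)).card ≤ S.card := by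
  apply Finset.card_le_card_of_injOn (fun y => c s(x, y))
  · intro y hy
    simp only [Finset.mem_coe, Finset.mem_filter] at hy
    exact hy.2.2
  · intro y hy y' hy' hcc
    simp only [Finset.mem_coe, Finset.mem_filter] at hy hy'
    by_contra hne
    exact hc s(x, y) (by simp [hy.2.1.symm]) s(x, y') (by simp [hy'.2.1.symm])
      (by simp only [ne_eq, Sym2.congr_right]; exact hne) ⟨x, by simp⟩ hcc

theorem stmt_1 {V : Type} [Fintype V] (H : SimpleGraph V) (hE : H.edgeSet.Nonempty)
    (k : ℕ) (hk : IsDegeneracy H k) :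
    ∃ (n : ℕ) (G : SimpleGraph (Fin n)),
      MaxDegreeLE G (k * H.edgeSet.ncard - k + Fintype.card V - 1) ∧
      ForcesRainbow G H := by
  classical
  obtain ⟨u0, w0, huw⟩ : ∃ u w, H.Adj u w := by
    obtain ⟨e, he⟩ := hE
    induction e using Sym2.ind with
    | _ u w => exact ⟨u, w, he⟩
  have hVne : Nonempty V := ⟨u0⟩
  set d : V := u0 with hd
  set m : ℕ := Fintype.card V with hm
  set eH : ℕ := H.edgeFinset.card with heH
  have hecard : H.edgeSet.ncard = eH := Set.ncard_eq_toFinset_card' _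
  have he1 : 1 ≤ eH := by
    have : H.edgeFinset.Nonempty := by
      rw [SimpleGraph.edgeFinset, Set.toFinset_nonempty]; exact hE
    exact Finset.card_pos.mpr this
  have hm1 : 1 ≤ m := Fintype.card_pos
  obtain ⟨L, hLnd, hLfin, hLdeg⟩ := exists_degen_list H k hk.1 Finset.univ
  have hlen : L.length = m := by
    rw [← List.toFinset_card_of_nodup hLnd, hLfin, Finset.card_univ]
  have hmemL : ∀ v : V, v ∈ L := fun v => by
    rw [← List.mem_toFinset, hLfin]; exact Finset.mem_univ v
  set n : ℕ := k * (eH - 1) + m with hn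
  have hn1 : 0 < n := by omega
  set df : Fin n := ⟨0, hn1⟩ with hdf
  -- helper: Lg
  set Lg : ℕ → V := fun i => L.getD i d with hLg
  have hLgget : ∀ i (h : i < m), Lg i = L[i]'(by rw [hlen]; exact h) := fun i h =>
    List.getD_eq_getElem L d (by rw [hlen]; exact h)
  have hLinj : ∀ a b, a < m → b < m → Lg a = Lg b → a = b := by
    intro a b ha hb hab
    rw [hLgget a ha, hLgget b hb] at hab
    exact (List.Nodup.getElem_inj_iff hLnd).mp hab
  have hkeq : k * (eH - 1) + k = k * eH := by
    obtain ⟨e', he'⟩ := Nat.exists_eq_add_of_le he1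
    rw [he', Nat.add_sub_cancel_left]; ring
  refine ⟨n, ⊤, ?_, ?_⟩
  · -- max degree
    intro v
    have hns : (⊤ : SimpleGraph (Fin n)).neighborSet v = ↑({v}ᶜ : Finset (Fin n)) := by
      ext w; simp [SimpleGraph.mem_neighborSet, eq_comm]
    rw [hns, Set.ncard_coe_finset, Finset.card_compl, Finset.card_singleton,
      Fintype.card_fin, hecard]
    omega
  · -- forces rainbow
    intro c hc
    -- main greedy claim
    have claim : ∀ j : ℕ, j ≤ m → ∃ M : List (Fin n), M.length = j ∧ M.Nodup ∧
        ∀ a b a' b', a < j → b < j → a' < j → b' < j →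
          H.Adj (Lg a) (Lg b) → H.Adj (Lg a') (Lg b') →
          s(Lg a, Lg b) ≠ s(Lg a', Lg b') →
          c s(M.getD a df, M.getD b df) ≠ c s(M.getD a' df, M.getD b' df) := by
      intro j
      induction j with
      | zero => exact fun _ => ⟨[], rfl, List.nodup_nil, fun a _ _ _ ha => absurd ha (Nat.not_lt_zero a)⟩
      | succ j ihj =>
        intro hj1
        have hjm : j < m := hj1
        obtain ⟨M, hMlen, hMnd, hMrb⟩ := ihj (le_of_lt hjm)
        set Mg : ℕ → Fin n := fun i => M.getD i df with hMg
        have hMgget : ∀ i (hi : i < j), Mg i = M[i]'(by rw [hMlen]; exact hi) := fun i h =>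
          List.getD_eq_getElem M df (by rw [hMlen]; exact h)
        have hMmem : ∀ i, i < j → Mg i ∈ M := by
          intro i hi; rw [hMgget i hi]; exact List.getElem_mem _
        have hMinj : ∀ a b, a < j → b < j → Mg a = Mg b → a = b := by
          intro a b ha hb hab
          rw [hMgget a ha, hMgget b hb] at hab
          exact (List.Nodup.getElem_inj_iff hMnd).mp hab
        set vj : V := Lg j with hvj
        set back : Finset ℕ := (Finset.range j).filter (fun b => H.Adj vj (Lg b)) with hback
        set used : Finset ℕ :=
          ((Finset.range j ×ˢ Finset.range j).filter
            (fun p => H.Adj (Lg p.1) (Lg p.2))).image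
            (fun p => c s(Mg p.1, Mg p.2)) with hused
        set Bad : Finset (Fin n) := M.toFinset ∪ back.biUnion (fun b =>
          Finset.univ.filter (fun y => y ≠ Mg b ∧ c s(Mg b, y) ∈ used)) with hBad
        -- back.card ≤ k
        have hbackk : back.card ≤ k := by
          have hjL : j < L.length := by rw [hlen]; exact hjm
          calc back.card
              ≤ ((H.neighborFinset (L[j]'hjL)) ∩ (L.take j).toFinset).card := by
                apply Finset.card_le_card_of_injOn Lg
                · intro b hb
                  simp only [hback, Finset.mem_coe, Finset.mem_filter, Finset.mem_range] at hb
                  rw [Finset.mem_coe, Finset.mem_inter]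
                  constructor
                  · rw [SimpleGraph.mem_neighborFinset, ← hLgget j hjm]
                    exact hb.2
                  · rw [List.mem_toFinset, hLgget b (lt_trans hb.1 hjm)]
                    have hbt : b < (L.take j).length := by
                      rw [List.length_take, hlen]; omega
                    have he2 : (L.take j)[b]'hbt
                        = L[b]'(by rw [hlen]; exact lt_trans hb.1 hjm) :=
                      List.getElem_take
                    rw [← he2]
                    exact List.getElem_mem _
                · intro a ha b hb hab
                  simp only [hback, Finset.coe_filter, Set.mem_setOf_eq, Finset.mem_range] at ha hb
                  exact hLinj a b (lt_trans ha.1 hjm) (lt_trans hb.1 hjm) hab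
            _ ≤ k := hLdeg j hjL
        -- the new edges
        set newE : Finset (Sym2 V) := back.image (fun b => s(vj, Lg b)) with hnewE
        have hnewcard : newE.card = back.card := by
          apply Finset.card_image_of_injOn
          intro a ha b hb hab
          simp only [hback, Finset.coe_filter, Set.mem_setOf_eq, Finset.mem_range] at ha hb
          rw [Sym2.congr_right] at hab
          exact hLinj a b (lt_trans ha.1 hjm) (lt_trans hb.1 hjm) hab
        have hnewsub : newE ⊆ H.edgeFinset := by
          intro z hz
          simp only [hnewE, Finset.mem_image] at hz
          obtain ⟨b, hb, rfl⟩ := hz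
          simp only [hback, Finset.mem_filter, Finset.mem_range] at hb
          rw [SimpleGraph.mem_edgeFinset]
          exact hb.2
        -- the map φ
        set φ : V → Fin n := fun v => Mg (L.idxOf v) with hφ
        have hφL : ∀ a, a < j → φ (Lg a) = Mg a := by
          intro a ha
          have ham : a < m := lt_trans ha hjm
          have haL : a < L.length := by rw [hlen]; exact ham
          have hidx : L.idxOf (Lg a) = a := by
            rw [hLgget a ham]
            have h1 : L.idxOf (L[a]'haL) < L.length :=
              List.idxOf_lt_length_iff.mpr (List.getElem_mem _)
            exact (List.Nodup.getElem_inj_iff hLnd).mp (List.getElem_idxOf h1)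
          rw [hφ]; simp only; rw [hidx]
        have husedsub : used ⊆ (H.edgeFinset \ newE).image (fun z => c (z.map φ)) := by
          intro col hcol
          simp only [hused, Finset.mem_image, Finset.mem_filter, Finset.mem_product,
            Finset.mem_range] at hcol
          obtain ⟨⟨a, b⟩, ⟨⟨ha, hb⟩, hadj⟩, rfl⟩ := hcol
          simp only at ha hb hadj ⊢
          refine Finset.mem_image.mpr ⟨s(Lg a, Lg b), ?_, ?_⟩
          · rw [Finset.mem_sdiff]
            constructor
            · rw [SimpleGraph.mem_edgeFinset]; exact hadj
            · intro hmem
              simp only [hnewE, Finset.mem_image] at hmem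
              obtain ⟨b', hb', heq⟩ := hmem
              simp only [hback, Finset.mem_filter, Finset.mem_range] at hb'
              rcases Sym2.eq_iff.mp heq.symm with ⟨h1, _⟩ | ⟨_, h2⟩
              · exact absurd (hLinj a j (lt_trans ha hjm) hjm h1) (by omega)
              · exact absurd (hLinj b j (lt_trans hb hjm) hjm h2) (by omega)
          · rw [Sym2.map_pair_eq, hφL a ha, hφL b hb]
        have husedcard : used.card ≤ eH - back.card := by
          calc used.card ≤ ((H.edgeFinset \ newE).image (fun z => c (z.map φ))).card :=
                Finset.card_le_card husedsub
            _ ≤ (H.edgeFinset \ newE).card := Finset.card_image_le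
            _ = eH - back.card := by rw [Finset.card_sdiff_of_subset hnewsub, hnewcard]
        -- Bad is small
        have htE : back.card ≤ eH := by
          rw [← hnewcard]; exact Finset.card_le_card hnewsub
        have hBadcard : Bad.card < n := by
          have h1 : M.toFinset.card ≤ j := by
            calc M.toFinset.card ≤ M.length := List.toFinset_card_le M
              _ = j := hMlen
          have h2 : (back.biUnion (fun b =>
              Finset.univ.filter (fun y => y ≠ Mg b ∧ c s(Mg b, y) ∈ used))).card
              ≤ back.card * used.card := by
            calc _ ≤ ∑ b ∈ back, (Finset.univ.filter
                  (fun y => y ≠ Mg b ∧ c s(Mg b, y) ∈ used)).card :=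
                Finset.card_biUnion_le
              _ ≤ ∑ _b ∈ back, used.card :=
                Finset.sum_le_sum (fun b _ => colour_fiber_card c hc (Mg b) used)
              _ = back.card * used.card := by rw [Finset.sum_const, smul_eq_mul]
          have h3 : back.card * used.card ≤ k * (eH - 1) := by
            rcases Nat.eq_zero_or_pos back.card with h0 | h0
            · rw [h0]; simp
            · calc back.card * used.card ≤ back.card * (eH - back.card) :=
                  Nat.mul_le_mul_left _ husedcard
                _ ≤ back.card * (eH - 1) := Nat.mul_le_mul_left _ (by omega)
                _ ≤ k * (eH - 1) := Nat.mul_le_mul_right _ hbackk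
          calc Bad.card ≤ M.toFinset.card + _ := Finset.card_union_le _ _
            _ < n := by omega
        -- choose y
        obtain ⟨y, hy⟩ : ∃ y, y ∉ Bad := by
          by_contra hcon
          push_neg at hcon
          have : (Finset.univ : Finset (Fin n)).card ≤ Bad.card :=
            Finset.card_le_card (fun z _ => hcon z)
          rw [Finset.card_univ, Fintype.card_fin] at this
          omega
        have hyM : y ∉ M := by
          intro h
          exact hy (Finset.mem_union_left _ (List.mem_toFinset.mpr h))
        have hyneq : ∀ b, b < j → y ≠ Mg b := by
          intro b hb h
          exact hyM (h ▸ hMmem b hb)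
        have hnotused : ∀ b, b < j → H.Adj vj (Lg b) → c s(Mg b, y) ∉ used := by
          intro b hb hadj hmem
          apply hy
          refine Finset.mem_union_right _ (Finset.mem_biUnion.mpr ⟨b, ?_, ?_⟩)
          · simp only [hback, Finset.mem_filter, Finset.mem_range]; exact ⟨hb, hadj⟩
          · simp only [Finset.mem_filter, Finset.mem_univ, true_and]
            exact ⟨hyneq b hb, hmem⟩
        have hinused : ∀ a b, a < j → b < j → H.Adj (Lg a) (Lg b) →
            c s(Mg a, Mg b) ∈ used := by
          intro a b ha hb hadj
          simp only [hused, Finset.mem_image]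
          exact ⟨(a, b), by
            simp only [Finset.mem_filter, Finset.mem_product, Finset.mem_range]
            exact ⟨⟨ha, hb⟩, hadj⟩, rfl⟩
        -- new edge colours differ from old colours
        have newold : ∀ b a' b', b < j → a' < j → b' < j → H.Adj vj (Lg b) →
            H.Adj (Lg a') (Lg b') → c s(y, Mg b) ≠ c s(Mg a', Mg b') := by
          intro b a' b' hb ha' hb' hadj hadj' hcon
          apply hnotused b hb hadj
          rw [Sym2.eq_swap] at hcon
          rw [hcon]
          exact hinused a' b' ha' hb' hadj'
        -- new edge colours pairwise distinct
        have newnew : ∀ b b', b < j → b' < j → b ≠ b' →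
            c s(y, Mg b) ≠ c s(y, Mg b') := by
          intro b b' hb hb' hne
          have hMne : Mg b ≠ Mg b' := fun h => hne (hMinj b b' hb hb' h)
          exact hc s(y, Mg b) (by simp [hyneq b hb]) s(y, Mg b')
            (by simp [hyneq b' hb'])
            (by simp only [ne_eq, Sym2.congr_right]; exact hMne) ⟨y, by simp⟩
        -- the new list
        refine ⟨M ++ [y], by simp [hMlen], by simp [List.nodup_append, hMnd, hyM]; exact fun a ha h => hyM (h ▸ ha), ?_⟩
        have hMg'lt : ∀ a, a < j → (M ++ [y]).getD a df = Mg a := by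
          intro a ha
          have haM : a < M.length := by rw [hMlen]; exact ha
          rw [List.getD_eq_getElem _ df (by simp; omega), hMgget a ha]
          exact List.getElem_append_left haM
        have hMg'j : (M ++ [y]).getD j df = y := by
          rw [List.getD_eq_getElem _ df (by simp [hMlen])]
          exact List.getElem_concat_length hMlen.symm (by simp [hMlen])
        -- the key asymmetric case analysis
        have key : ∀ a b a' b', a < j + 1 → b < j → a' < j + 1 → b' < j →
            H.Adj (Lg a) (Lg b) → H.Adj (Lg a') (Lg b') →
            s(Lg a, Lg b) ≠ s(Lg a', Lg b') →
            c s((M ++ [y]).getD a df, (M ++ [y]).getD b df) ≠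
              c s((M ++ [y]).getD a' df, (M ++ [y]).getD b' df) := by
          intro a b a' b' ha hb ha' hb' hadj hadj' hne
          rw [hMg'lt b hb, hMg'lt b' hb']
          rcases Nat.lt_succ_iff_lt_or_eq.mp ha with haj | rfl
          · rw [hMg'lt a haj]
            rcases Nat.lt_succ_iff_lt_or_eq.mp ha' with haj' | rfl
            · rw [hMg'lt a' haj']
              exact hMrb a b a' b' haj hb haj' hb' hadj hadj' hne
            · rw [hMg'j]
              exact (newold b' a b hb' haj hb hadj' hadj).symm
          · rw [hMg'j]
            rcases Nat.lt_succ_iff_lt_or_eq.mp ha' with haj' | rfl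
            · rw [hMg'lt a' haj']
              exact newold b a' b' hb haj' hb' hadj hadj'
            · rw [hMg'j]
              apply newnew b b' hb hb'
              intro hbb'
              exact hne (by rw [hbb'])
        -- symmetrize
        intro a b a' b' ha hb ha' hb' hadj hadj' hne
        have norm : ∀ p q, p < j + 1 → q < j + 1 → H.Adj (Lg p) (Lg q) →
            ∃ p' q', p' < j + 1 ∧ q' < j ∧ H.Adj (Lg p') (Lg q') ∧
              s(Lg p', Lg q') = s(Lg p, Lg q) ∧
              s((M ++ [y]).getD p' df, (M ++ [y]).getD q' df) =
                s((M ++ [y]).getD p df, (M ++ [y]).getD q df) := by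
          intro p q hp hq hpq
          rcases Nat.lt_succ_iff_lt_or_eq.mp hq with hqj | rfl
          · exact ⟨p, q, hp, hqj, hpq, rfl, rfl⟩
          · have hpj : p < q := by
              rcases Nat.lt_succ_iff_lt_or_eq.mp hp with h | rfl
              · exact h
              · exact absurd hpq (H.irrefl)
            exact ⟨q, p, hq, hpj, hpq.symm, Sym2.eq_swap, Sym2.eq_swap⟩
        obtain ⟨p1, q1, hp1, hq1, hadj1, hs1, hm1'⟩ := norm a b ha hb hadj
        obtain ⟨p2, q2, hp2, hq2, hadj2, hs2, hm2'⟩ := norm a' b' ha' hb' hadj'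
        rw [← hm1', ← hm2']
        exact key p1 q1 p2 q2 hp1 hq1 hp2 hq2 hadj1 hadj2 (by rw [hs1, hs2]; exact hne)
    obtain ⟨M, hMlen, hMnd, hMrb⟩ := claim m le_rfl
    have hidxlt : ∀ v : V, L.idxOf v < m := fun v => by
      rw [← hlen]; exact List.idxOf_lt_length_iff.mpr (hmemL v)
    have hLgidx : ∀ v : V, Lg (L.idxOf v) = v := fun v => by
      rw [hLgget _ (hidxlt v)]
      exact List.getElem_idxOf (by rw [hlen]; exact hidxlt v)
    have hfinj : Function.Injective (fun v : V => M.getD (L.idxOf v) df) := by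
      intro u v huv
      have hMgget : ∀ i (hi : i < m), M.getD i df = M[i]'(by rw [hMlen]; exact hi) :=
        fun i h => List.getD_eq_getElem M df (by rw [hMlen]; exact h)
      have h1 : L.idxOf u = L.idxOf v := by
        simp only at huv
        rw [hMgget _ (hidxlt u), hMgget _ (hidxlt v)] at huv
        exact (List.Nodup.getElem_inj_iff hMnd).mp huv
      rw [← hLgidx u, ← hLgidx v, h1]
    refine ⟨⟨fun v => M.getD (L.idxOf v) df, hfinj⟩, ?_, ?_⟩
    · intro u v huv
      simp only [Function.Embedding.coeFn_mk, SimpleGraph.top_adj]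
      exact fun h => (H.ne_of_adj huv) (hfinj h)
    · intro u v x z hadj1 hadj2 hne
      simp only [Function.Embedding.coeFn_mk]
      exact hMrb (L.idxOf u) (L.idxOf v) (L.idxOf x) (L.idxOf z)
        (hidxlt u) (hidxlt v) (hidxlt x) (hidxlt z)
        (by rw [hLgidx u, hLgidx v]; exact hadj1)
        (by rw [hLgidx x, hLgidx z]; exact hadj2)
        (by rw [hLgidx u, hLgidx v, hLgidx x, hLgidx z]; exact hne)
end

section
/- Let k ≥ 2 be an integer, let T be a tree on k+2 vertices which is not a star, and let G be a k-regular connected graph with girth at least k+2. If there exists a proper edge colouring of G with no rainbow copy of T, then G is k-edge-colourable (i.e., the chromatic index of G equals k). -/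
open SimpleGraph

/-- All edges of `F` share a common vertex. -/
def IsStar {V : Type*} (F : SimpleGraph V) : Prop :=
  ∃ v, ∀ e ∈ F.edgeSet, v ∈ e


set_option linter.unusedSectionVars false
set_option maxHeartbeats 1000000

section AntiRamseyAux

variable {VT VG : Type} [Fintype VT] [Fintype VG] [DecidableEq VT] [DecidableEq VG]
variable {T : SimpleGraph VT} {G : SimpleGraph VG}

def pal (G : SimpleGraph VG) [DecidableRel G.Adj] (c : Sym2 VG → ℕ) (v : VG) : Finset ℕ :=
  (G.neighborFinset v).image fun x => c s(v, x)


variable [DecidableRel T.Adj] [DecidableRel G.Adj] {c : Sym2 VG → ℕ} {k : ℕ}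

lemma mem_pal' {γ : ℕ} {v : VG} : γ ∈ pal G c v ↔ ∃ x, G.Adj v x ∧ c s(v, x) = γ := by
  simp [pal, SimpleGraph.mem_neighborFinset]
lemma pal_card (hprop : IsProperEdgeColoring G c)
    (hreg : ∀ v, (G.neighborFinset v).card = k) (v : VG) : (pal G c v).card = k := by
  rw [pal, Finset.card_image_of_injOn, hreg]
  intro x hx y hy hxy
  by_contra hne
  have hx' : G.Adj v x := by simpa using hx
  have hy' : G.Adj v y := by simpa using hy
  exact hprop s(v, x) ((SimpleGraph.mem_edgeSet G).2 hx') s(v, y) ((SimpleGraph.mem_edgeSet G).2 hy')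
    (fun hs => hne (Sym2.congr_right.mp hs)) ⟨v, by simp, by simp⟩ hxy


structure EmbInv (T : SimpleGraph VT) (G : SimpleGraph VG) (c : Sym2 VG → ℕ)
    (S : Finset VT) (f : VT → VG) (U : Finset ℕ) : Prop where
  inj : Set.InjOn f S
  hom : ∀ a ∈ S, ∀ b ∈ S, T.Adj a b → G.Adj (f a) (f b)
  rainbow : ∀ a ∈ S, ∀ b ∈ S, ∀ x ∈ S, ∀ y ∈ S, T.Adj a b → T.Adj x y →
    s(a, b) ≠ s(x, y) → c s(f a, f b) ≠ c s(f x, f y)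
  memU : ∀ a ∈ S, ∀ b ∈ S, T.Adj a b → c s(f a, f b) ∈ U
  surjU : ∀ γ ∈ U, ∃ a, a ∈ S ∧ ∃ b, b ∈ S ∧ T.Adj a b ∧ c s(f a, f b) = γ
  cardU : U.card + 1 = S.card
  conn : ∀ a ∈ S, ∀ b ∈ S, ∃ w : T.Walk a b, ∀ x ∈ w.support, x ∈ S

lemma unique_nbr (hac : T.IsAcyclic) {S : Finset VT}
    (hconnS : ∀ a ∈ S, ∀ b ∈ S, ∃ w : T.Walk a b, ∀ x ∈ w.support, x ∈ S)
    {t : VT} (ht : t ∉ S) {b₁ b₂ : VT} (hb₁ : b₁ ∈ S) (hb₂ : b₂ ∈ S)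
    (h₁ : T.Adj t b₁) (h₂ : T.Adj t b₂) : b₁ = b₂ := by
  by_contra hne
  obtain ⟨w, hw⟩ := hconnS b₁ hb₁ b₂ hb₂
  set P := w.toPath with hP
  have hPsupp : ∀ x ∈ (P : T.Walk b₁ b₂).support, x ∈ S := fun x hx =>
    hw x (SimpleGraph.Walk.support_toPath_subset w hx)
  have htP : t ∉ (P : T.Walk b₁ b₂).support := fun hmem => ht (hPsupp t hmem)
  have hQ : (SimpleGraph.Walk.cons h₁ (P : T.Walk b₁ b₂)).IsPath :=
    SimpleGraph.Walk.IsPath.cons P.isPath htP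
  have hcyc : (SimpleGraph.Walk.cons h₂ (SimpleGraph.Walk.cons h₁ (P : T.Walk b₁ b₂)).reverse).IsCycle := by
    rw [SimpleGraph.Walk.cons_isCycle_iff]
    refine ⟨hQ.reverse, ?_⟩
    rw [SimpleGraph.Walk.edges_reverse, List.mem_reverse]
    intro hmem
    rw [SimpleGraph.Walk.edges_cons, List.mem_cons] at hmem
    rcases hmem with hmem | hmem
    · rw [Sym2.congr_right] at hmem
      exact hne hmem.symm
    · exact htP ((P : T.Walk b₁ b₂).fst_mem_support_of_mem_edges hmem)
  exact hac _ hcyc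

lemma mapWalk (f : VT → VG) (S : Finset VT)
    (hhom : ∀ a ∈ S, ∀ b ∈ S, T.Adj a b → G.Adj (f a) (f b)) :
    ∀ {a b : VT} (w : T.Walk a b), (∀ x ∈ w.support, x ∈ S) →
      ∃ Q : G.Walk (f a) (f b), Q.support = w.support.map f ∧
        ∀ e ∈ Q.edges, ∃ a', a' ∈ S ∧ ∃ b', b' ∈ S ∧ T.Adj a' b' ∧ e = s(f a', f b') := by
  intro a b w
  induction w with
  | nil => exact fun _ => ⟨SimpleGraph.Walk.nil, by simp, by simp⟩
  | @cons x y z hadj w ih =>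
    intro hsupp
    have hx : x ∈ S := hsupp x (by simp)
    have hy : y ∈ S := hsupp y (by simp [SimpleGraph.Walk.support_cons])
    obtain ⟨Q, hQs, hQe⟩ := ih (fun v hv => hsupp v (by simp [SimpleGraph.Walk.support_cons, hv]))
    refine ⟨SimpleGraph.Walk.cons (hhom x hx y hy hadj) Q, ?_, ?_⟩
    · simp [SimpleGraph.Walk.support_cons, hQs]
    · intro e he
      rw [SimpleGraph.Walk.edges_cons, List.mem_cons] at he
      rcases he with he | he
      · exact ⟨x, hx, y, hy, hadj, he⟩
      · exact hQe e he

lemma fresh_vertex (hgirth : ((k + 2 : ℕ) : ℕ∞) ≤ G.egirth)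
    {S : Finset VT} (hScard : S.card ≤ k + 1) {f : VT → VG} {U : Finset ℕ}
    (hinj : Set.InjOn f S)
    (hhom : ∀ a ∈ S, ∀ b ∈ S, T.Adj a b → G.Adj (f a) (f b))
    (hmemU : ∀ a ∈ S, ∀ b ∈ S, T.Adj a b → c s(f a, f b) ∈ U)
    (hconnS : ∀ a ∈ S, ∀ b ∈ S, ∃ w : T.Walk a b, ∀ x ∈ w.support, x ∈ S)
    {p : VT} (hp : p ∈ S) {x : VG} (hadj : G.Adj (f p) x)
    (hcol : c s(f p, x) ∉ U) : ∀ s ∈ S, f s ≠ x := by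
  intro s hs hfs
  by_cases hsp : s = p
  · subst hsp; exact G.irrefl (hfs ▸ hadj)
  obtain ⟨w, hw⟩ := hconnS p hp s hs
  set P := w.toPath with hPdef
  have hPsupp : ∀ z ∈ (P : T.Walk p s).support, z ∈ S := fun z hz =>
    hw z (SimpleGraph.Walk.support_toPath_subset w hz)
  obtain ⟨Q, hQs, hQe⟩ := mapWalk f S hhom (P : T.Walk p s) hPsupp
  -- Q is a path
  have hQnodup : Q.support.Nodup := by
    rw [hQs]
    exact P.isPath.support_nodup.map_on
      (fun a ha b hb hab => hinj (hPsupp a ha) (hPsupp b hb) hab)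
  have hQpath : Q.IsPath := SimpleGraph.Walk.IsPath.mk' hQnodup
  -- length bound
  have hQlen : Q.length + 1 ≤ S.card := by
    have h1 : Q.support.length = Q.length + 1 := SimpleGraph.Walk.length_support Q
    have h2 : Q.support.toFinset.card = Q.support.length := List.toFinset_card_of_nodup hQnodup
    have h3 : Q.support.toFinset ⊆ S.image f := by
      intro z hz
      rw [List.mem_toFinset, hQs, List.mem_map] at hz
      obtain ⟨a, ha, rfl⟩ := hz
      exact Finset.mem_image_of_mem f (hPsupp a ha)
    calc Q.length + 1 = Q.support.toFinset.card := by rw [h2, h1]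
      _ ≤ (S.image f).card := Finset.card_le_card h3
      _ ≤ S.card := Finset.card_image_le
  -- build the cycle
  have hQ' : G.Walk (f p) x := Q.copy rfl hfs
  set Q' : G.Walk (f p) x := Q.copy rfl hfs with hQ'def
  have hQ'edges : Q'.edges = Q.edges := SimpleGraph.Walk.edges_copy Q rfl hfs
  have hQ'path : Q'.IsPath := by
    rw [hQ'def]
    exact (SimpleGraph.Walk.isPath_copy Q rfl hfs).mpr hQpath
  have hcyc : (SimpleGraph.Walk.cons hadj Q'.reverse).IsCycle := by
    rw [SimpleGraph.Walk.cons_isCycle_iff]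
    refine ⟨hQ'path.reverse, ?_⟩
    rw [SimpleGraph.Walk.edges_reverse, List.mem_reverse, hQ'edges]
    intro hmem
    obtain ⟨a', ha', b', hb', hadj', he⟩ := hQe _ hmem
    exact hcol (he ▸ hmemU a' ha' b' hb' hadj')
  -- girth contradiction
  have hlen : (SimpleGraph.Walk.cons hadj Q'.reverse).length ≤ k + 1 := by
    rw [SimpleGraph.Walk.length_cons, SimpleGraph.Walk.length_reverse, hQ'def,
      SimpleGraph.Walk.length_copy]
    omega
  have hgl : ((k + 2 : ℕ) : ℕ∞) ≤ ((SimpleGraph.Walk.cons hadj Q'.reverse).length : ℕ∞) :=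
    le_trans hgirth (SimpleGraph.le_egirth.mp le_rfl _ _ hcyc)
  have : (k + 2 : ℕ) ≤ (SimpleGraph.Walk.cons hadj Q'.reverse).length := by
    exact_mod_cast hgl
  omega


lemma step (hgirth : ((k + 2 : ℕ) : ℕ∞) ≤ G.egirth) (hac : T.IsAcyclic)
    {S : Finset VT} {f : VT → VG} {U : Finset ℕ} (hI : EmbInv T G c S f U)
    (hScard : S.card ≤ k + 1) {t : VT} (ht : t ∉ S) {p : VT} (hp : p ∈ S)
    (hadjT : T.Adj p t) {γ : ℕ} (hγp : γ ∈ pal G c (f p)) (hγU : γ ∉ U) :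
    ∃ f', (∀ a ∈ S, f' a = f a) ∧ EmbInv T G c (insert t S) f' (insert γ U) := by
  obtain ⟨x, hxadj, hxcol⟩ := mem_pal'.mp hγp
  have hfresh : ∀ s ∈ S, f s ≠ x :=
    fresh_vertex hgirth hScard hI.inj hI.hom hI.memU hI.conn hp hxadj
      (by rw [hxcol]; exact hγU)
  refine ⟨Function.update f t x, fun a ha => Function.update_of_ne (by rintro rfl; exact ht ha) _ _, ?_⟩
  set f' := Function.update f t x with hf'def
  have hagree : ∀ a ∈ S, f' a = f a :=
    fun a ha => Function.update_of_ne (by rintro rfl; exact ht ha) _ _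
  have hft : f' t = x := Function.update_self _ _ _
  have huniq : ∀ b ∈ S, T.Adj t b → b = p :=
    fun b hb hadj => unique_nbr hac hI.conn ht hb hp hadj hadjT.symm
  have hswap : c s(x, f p) = γ := by rw [Sym2.eq_swap]; exact hxcol
  have key : ∀ a ∈ insert t S, ∀ b ∈ insert t S, T.Adj a b →
      (a ∈ S ∧ b ∈ S) ∨ (s(a, b) = s(t, p) ∧ s(f' a, f' b) = s(x, f p)) := by
    intro a ha b hb hadj
    rcases Finset.mem_insert.mp ha with rfl | haS
    · rcases Finset.mem_insert.mp hb with rfl | hbS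
      · exact absurd hadj (T.irrefl)
      · have hbp : b = p := huniq b hbS hadj
        subst hbp
        exact Or.inr ⟨rfl, by rw [hft, hagree b hbS]⟩
    · rcases Finset.mem_insert.mp hb with rfl | hbS
      · have hap : a = p := huniq a haS hadj.symm
        subst hap
        exact Or.inr ⟨Sym2.eq_swap, by rw [hft, hagree a haS, Sym2.eq_swap]⟩
      · exact Or.inl ⟨haS, hbS⟩
  constructor
  · -- inj
    intro a ha b hb heq
    simp only [Finset.coe_insert, Set.mem_insert_iff, Finset.mem_coe] at ha hb
    rcases ha with rfl | haS
    · rcases hb with rfl | hbS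
      · rfl
      · rw [hft, hagree b hbS] at heq
        exact absurd heq.symm (hfresh b hbS)
    · rcases hb with rfl | hbS
      · rw [hft, hagree a haS] at heq
        exact absurd heq (hfresh a haS)
      · rw [hagree a haS, hagree b hbS] at heq
        exact hI.inj haS hbS heq
  · -- hom
    intro a ha b hb hadj
    rcases key a ha b hb hadj with ⟨haS, hbS⟩ | ⟨_, hfe⟩
    · rw [hagree a haS, hagree b hbS]; exact hI.hom a haS b hbS hadj
    · rcases Sym2.eq_iff.mp hfe with ⟨h1, h2⟩ | ⟨h1, h2⟩
      · rw [h1, h2]; exact hxadj.symm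
      · rw [h1, h2]; exact hxadj
  · -- rainbow
    intro a ha b hb x' hx' y hy hab hxy hne
    rcases key a ha b hb hab with ⟨haS, hbS⟩ | ⟨he1, hfe1⟩
    · rcases key x' hx' y hy hxy with ⟨hxS, hyS⟩ | ⟨he2, hfe2⟩
      · rw [hagree a haS, hagree b hbS, hagree x' hxS, hagree y hyS]
        exact hI.rainbow a haS b hbS x' hxS y hyS hab hxy hne
      · rw [hagree a haS, hagree b hbS, hfe2, hswap]
        intro hcontra
        exact hγU (hcontra ▸ hI.memU a haS b hbS hab)
    · rcases key x' hx' y hy hxy with ⟨hxS, hyS⟩ | ⟨he2, hfe2⟩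
      · rw [hagree x' hxS, hagree y hyS, hfe1, hswap]
        intro hcontra
        exact hγU (hcontra.symm ▸ hI.memU x' hxS y hyS hxy)
      · exact absurd (he1.trans he2.symm) hne
  · -- memU
    intro a ha b hb hadj
    rcases key a ha b hb hadj with ⟨haS, hbS⟩ | ⟨_, hfe⟩
    · rw [hagree a haS, hagree b hbS]
      exact Finset.mem_insert_of_mem (hI.memU a haS b hbS hadj)
    · rw [hfe, hswap]; exact Finset.mem_insert_self _ _
  · -- surjU
    intro γ' hγ'
    rcases Finset.mem_insert.mp hγ' with rfl | hγ'U
    · exact ⟨t, Finset.mem_insert_self _ _, p, Finset.mem_insert_of_mem hp, hadjT.symm,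
        by rw [hft, hagree p hp, hswap]⟩
    · obtain ⟨a, haS, b, hbS, hadj, hc⟩ := hI.surjU γ' hγ'U
      exact ⟨a, Finset.mem_insert_of_mem haS, b, Finset.mem_insert_of_mem hbS, hadj,
        by rw [hagree a haS, hagree b hbS]; exact hc⟩
  · -- cardU
    rw [Finset.card_insert_of_notMem hγU, Finset.card_insert_of_notMem ht, ← hI.cardU]
  · -- conn
    have toP : ∀ a ∈ insert t S, ∃ w : T.Walk a p, ∀ z ∈ w.support, z ∈ insert t S := by
      intro a ha
      rcases Finset.mem_insert.mp ha with rfl | haS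
      · refine ⟨SimpleGraph.Walk.cons hadjT.symm SimpleGraph.Walk.nil, ?_⟩
        intro z hz
        simp only [SimpleGraph.Walk.support_cons, SimpleGraph.Walk.support_nil,
          List.mem_cons, List.mem_singleton] at hz
        rcases hz with rfl | hz
        · exact Finset.mem_insert_self _ _
        · simp at hz; subst hz; exact Finset.mem_insert_of_mem hp
      · obtain ⟨w, hw⟩ := hI.conn a haS p hp
        exact ⟨w, fun z hz => Finset.mem_insert_of_mem (hw z hz)⟩
    intro a ha b hb
    obtain ⟨wa, hwa⟩ := toP a ha
    obtain ⟨wb, hwb⟩ := toP b hb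
    refine ⟨wa.append wb.reverse, ?_⟩
    intro z hz
    rw [SimpleGraph.Walk.mem_support_append_iff] at hz
    rcases hz with hz | hz
    · exact hwa z hz
    · rw [SimpleGraph.Walk.support_reverse, List.mem_reverse] at hz
      exact hwb z hz
lemma exists_next {S : Finset VT} {ℓ pℓ : VT} (hpℓ : pℓ ∈ S)
    (hℓu : ∀ y, T.Adj ℓ y → y = pℓ) (hTconn : T.Connected)
    {x : VT} (hx : x ∉ S) (hxℓ : x ≠ ℓ) :
    ∃ t p', t ∉ S ∧ t ≠ ℓ ∧ p' ∈ S ∧ T.Adj p' t := by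
  obtain ⟨w⟩ := hTconn.preconnected x pℓ
  have aux : ∀ {a b : VT} (_ : T.Walk a b), b ∈ S → a ∉ S → a ≠ ℓ →
      ∃ t p', t ∉ S ∧ t ≠ ℓ ∧ p' ∈ S ∧ T.Adj p' t := by
    intro a b w
    induction w with
    | nil => exact fun hb ha _ => absurd hb ha
    | @cons a z _ h w' ih =>
      intro hb ha haℓ
      by_cases hz : z ∈ S
      · exact ⟨a, z, ha, haℓ, hz, h.symm⟩
      · by_cases hzℓ : z = ℓ
        · subst hzℓ
          have hpa : a = pℓ := hℓu a h.symm
          exact absurd (hpa ▸ hpℓ) ha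
        · exact ih hb hz hzℓ
  exact aux w hpℓ hx hxℓ

lemma exists_leaf (hT : T.IsTree) (hcard : 2 ≤ Fintype.card VT) :
    ∃ ℓ p, T.Adj ℓ p ∧ ∀ y, T.Adj ℓ y → y = p := by
  -- some vertex has degree ≤ 1
  have hsum : ∑ v, T.degree v = 2 * (Fintype.card VT - 1) := by
    rw [SimpleGraph.sum_degrees_eq_twice_card_edges]
    congr 1
    have := hT.card_edgeFinset
    omega
  have hdeg : ∃ ℓ, T.degree ℓ ≤ 1 := by
    by_contra hall
    push_neg at hall
    have : ∀ v ∈ (Finset.univ : Finset VT), 2 ≤ T.degree v := fun v _ => hall v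
    have hge : (Finset.univ : Finset VT).card • 2 ≤ ∑ v, T.degree v :=
      Finset.card_nsmul_le_sum _ _ _ this
    rw [hsum, Finset.card_univ] at hge
    simp only [smul_eq_mul] at hge
    omega
  obtain ⟨ℓ, hℓ⟩ := hdeg
  -- ℓ has a neighbour
  have hne : ∃ p, T.Adj ℓ p := by
    obtain ⟨w, hw⟩ := Fintype.exists_ne_of_one_lt_card (by omega) ℓ
    obtain ⟨walk⟩ := hT.isConnected.preconnected ℓ w
    cases walk with
    | nil => exact absurd rfl hw.symm
    | cons h _ => exact ⟨_, h⟩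
  obtain ⟨p, hp⟩ := hne
  refine ⟨ℓ, p, hp, fun y hy => ?_⟩
  have h1 : y ∈ T.neighborFinset ℓ := (SimpleGraph.mem_neighborFinset ..).2 hy
  have h2 : p ∈ T.neighborFinset ℓ := (SimpleGraph.mem_neighborFinset ..).2 hp
  have : (T.neighborFinset ℓ).card ≤ 1 := hℓ
  rw [Finset.card_le_one] at this
  exact this _ h1 _ h2

lemma tree_struct (hT : T.IsTree) (hcard : 4 ≤ Fintype.card VT) (hstar : ¬ IsStar T) :
    ∃ ℓ p q r : VT, T.Adj ℓ p ∧ T.Adj p q ∧ T.Adj q r ∧ (∀ y, T.Adj ℓ y → y = p) ∧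
      q ≠ ℓ ∧ r ≠ ℓ ∧ r ≠ p := by
  obtain ⟨ℓ, p, hℓp, hℓu⟩ := exists_leaf hT (by omega)
  -- find q adjacent to p, q ≠ ℓ, with a neighbour r ≠ p
  by_cases hq : ∃ q, T.Adj p q ∧ q ≠ ℓ ∧ ∃ r, T.Adj q r ∧ r ≠ p
  · obtain ⟨q, hpq, hqℓ, r, hqr, hrp⟩ := hq
    have hrℓ : r ≠ ℓ := by
      rintro rfl
      have : q = p := hℓu q hqr.symm
      exact T.irrefl (this ▸ hpq)
    exact ⟨ℓ, p, q, r, hℓp, hpq, hqr, hℓu, hqℓ, hrℓ, hrp⟩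
  · exfalso
    push_neg at hq
    -- every neighbour z of p has all its neighbours equal to p
    have hcomb : ∀ z, T.Adj p z → ∀ y, T.Adj z y → y = p := by
      intro z hz y hy
      by_cases hzℓ : z = ℓ
      · subst hzℓ; exact hℓu y hy
      · exact hq z hz hzℓ y hy
    -- every vertex other than p is adjacent to p
    have hadjall : ∀ z, z ≠ p → T.Adj p z := by
      intro z hzp
      obtain ⟨w⟩ := hT.isConnected.preconnected p z
      have hwp : w.toPath.1.IsPath := w.toPath.2
      have : ∀ (w' : T.Walk p z), w'.IsPath → T.Adj p z := by
        intro w' hw'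
        cases w' with
        | nil => exact absurd rfl hzp
        | @cons _ z₁ _ h w'' =>
          cases w'' with
          | nil => exact h
          | @cons _ z₂ _ h₂ w₃ =>
            have hz₂ : z₂ = p := hcomb z₁ h z₂ h₂
            subst hz₂
            exfalso
            have hnodup := hw'.support_nodup
            rw [SimpleGraph.Walk.support_cons, SimpleGraph.Walk.support_cons] at hnodup
            exact (List.nodup_cons.mp hnodup).1
              (List.mem_cons.2 (Or.inr w₃.start_mem_support))
      exact this w.toPath.1 hwp
    -- so T is a star with centre p
    apply hstar
    refine ⟨p, ?_⟩
    intro e he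
    induction e with
    | h x y =>
      rw [SimpleGraph.mem_edgeSet] at he
      by_cases hxp : x = p
      · subst hxp; exact Sym2.mem_mk_left _ _
      · have h1 : T.Adj p x := hadjall x hxp
        have h2 : y = p := hcomb x h1 y he
        subst h2; exact Sym2.mem_mk_right _ _

lemma greedy (hprop : IsProperEdgeColoring G c)
    (hreg : ∀ v, (G.neighborFinset v).card = k)
    (hgirth : ((k + 2 : ℕ) : ℕ∞) ≤ G.egirth) (hac : T.IsAcyclic) (hTconn : T.Connected)
    (hk : 2 ≤ k) (hVT : Fintype.card VT = k + 2)
    {ℓ pℓ : VT} (hℓu : ∀ y, T.Adj ℓ y → y = pℓ) :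
    ∀ (n : ℕ) (S : Finset VT) (f : VT → VG) (U : Finset ℕ), EmbInv T G c S f U →
      ℓ ∉ S → pℓ ∈ S → (Finset.univ \ insert ℓ S).card = n →
      ∃ f' U', EmbInv T G c (Finset.univ.erase ℓ) f' U' ∧ (∀ a ∈ S, f' a = f a) ∧ U ⊆ U' := by
  intro n
  induction n with
  | zero =>
    intro S f U hI hℓS hpℓS hcard
    have huniv : insert ℓ S = Finset.univ := by
      have : Finset.univ ⊆ insert ℓ S := by
        intro z _
        by_contra hz
        have : z ∈ Finset.univ \ insert ℓ S := Finset.mem_sdiff.mpr ⟨Finset.mem_univ z, hz⟩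
        rw [Finset.card_eq_zero] at hcard
        simp [hcard] at this
      exact Finset.Subset.antisymm (Finset.subset_univ _) this
    have hS : S = Finset.univ.erase ℓ := by
      rw [← huniv, Finset.erase_insert hℓS]
    exact ⟨f, U, hS ▸ hI, fun a _ => rfl, Finset.Subset.refl U⟩
  | succ n ih =>
    intro S f U hI hℓS hpℓS hcard
    have hne : ∃ x, x ∉ S ∧ x ≠ ℓ := by
      have : (Finset.univ \ insert ℓ S).Nonempty := by
        rw [← Finset.card_pos, hcard]; omega
      obtain ⟨x, hx⟩ := this
      rw [Finset.mem_sdiff, Finset.mem_insert] at hx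
      exact ⟨x, fun hxS => hx.2 (Or.inr hxS), fun hxl => hx.2 (Or.inl hxl)⟩
    obtain ⟨x, hxS, hxℓ⟩ := hne
    obtain ⟨t, p', htS, htℓ, hp'S, hadj⟩ := exists_next hpℓS hℓu hTconn hxS hxℓ
    -- cardinality facts
    have hSsub : insert ℓ S ⊆ Finset.univ := Finset.subset_univ _
    have hinscard : (insert ℓ S).card = k + 2 - (n + 1) := by
      have := Finset.card_sdiff_add_card_eq_card hSsub
      rw [hcard] at this
      have h2 : (Finset.univ : Finset VT).card = k + 2 := by rw [Finset.card_univ, hVT]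
      omega
    have hnk : n + 1 ≤ k + 1 := by
      have h1 : 0 < (insert ℓ S).card := Finset.card_pos.mpr ⟨ℓ, Finset.mem_insert_self _ _⟩
      omega
    have hScard : S.card = k - n := by
      have := Finset.card_insert_of_notMem hℓS
      omega
    have hUcard : U.card ≤ k - n - 1 := by
      have := hI.cardU
      omega
    -- pick a fresh colour at f p'
    have hpalcard : (pal G c (f p')).card = k := pal_card hprop hreg _
    have hSpos : 0 < S.card := Finset.card_pos.mpr ⟨pℓ, hpℓS⟩
    have hfree : ((pal G c (f p')) \ U).Nonempty := by
      by_contra hempty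
      rw [Finset.not_nonempty_iff_eq_empty, Finset.sdiff_eq_empty_iff_subset] at hempty
      have hle := Finset.card_le_card hempty
      rw [hpalcard] at hle
      omega
    obtain ⟨γ, hγ⟩ := hfree
    rw [Finset.mem_sdiff] at hγ
    obtain ⟨f₁, hagree₁, hI₁⟩ := step hgirth hac hI (by omega) htS hp'S hadj hγ.1 hγ.2
    have hrec := ih (insert t S) f₁ (insert γ U) hI₁
      (by rw [Finset.mem_insert]; push_neg; exact ⟨fun h => htℓ h.symm, hℓS⟩)
      (Finset.mem_insert_of_mem hpℓS) ?_
    · obtain ⟨f', U', hI', hagree', hsub'⟩ := hrec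
      refine ⟨f', U', hI', ?_, ?_⟩
      · intro a ha
        rw [hagree' a (Finset.mem_insert_of_mem ha), hagree₁ a ha]
      · exact fun γ' hγ' => hsub' (Finset.mem_insert_of_mem hγ')
    · -- card univ \ insert ℓ (insert t S) = n
      have htmem : t ∈ Finset.univ \ insert ℓ S :=
        Finset.mem_sdiff.mpr ⟨Finset.mem_univ t, by simp [htℓ, htS]⟩
      rw [Finset.insert_comm, Finset.sdiff_insert, Finset.card_erase_of_mem htmem, hcard]
      omega
lemma pal_subset (hprop : IsProperEdgeColoring G c)
    (hreg : ∀ v, (G.neighborFinset v).card = k)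
    (hgirth : ((k + 2 : ℕ) : ℕ∞) ≤ G.egirth) (hT : T.IsTree)
    (hTcard : Fintype.card VT = k + 2) (hTstar : ¬ IsStar T) (hk : 2 ≤ k)
    (hnorb : ¬ HasRainbowCopy G c T) {u v : VG} (hadj : G.Adj u v) :
    pal G c u ⊆ pal G c v := by
  have hac := hT.IsAcyclic
  intro α hα
  by_contra hαv
  obtain ⟨ℓ, p, q, r, hℓp, hpq, hqr, hℓu, hqℓ, hrℓ, hrp⟩ :=
    tree_struct hT (by omega) hTstar
  obtain ⟨u', huu', hu'col⟩ := mem_pal'.mp hα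
  set β := c s(u, v) with hβdef
  have hβv : β ∈ pal G c v := mem_pal'.mpr ⟨u, hadj.symm, by rw [Sym2.eq_swap]⟩
  have hu'v : u' ≠ v := by
    rintro rfl
    exact hαv (hu'col ▸ hβv)
  have hαβ : α ≠ β := fun hcon => hαv (hcon ▸ hβv)
  -- the pair {q, p} is T-connected
  have hconn2 : ∀ a ∈ ({q, p} : Finset VT), ∀ b ∈ ({q, p} : Finset VT),
      ∃ w : T.Walk a b, ∀ x ∈ w.support, x ∈ ({q, p} : Finset VT) := by
    intro a ha b hb
    simp only [Finset.mem_insert, Finset.mem_singleton] at ha hb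
    rcases ha with rfl | rfl <;> rcases hb with rfl | rfl
    · exact ⟨SimpleGraph.Walk.nil, by simp⟩
    · exact ⟨SimpleGraph.Walk.cons hpq.symm SimpleGraph.Walk.nil, by simp⟩
    · exact ⟨SimpleGraph.Walk.cons hpq SimpleGraph.Walk.nil, by simp⟩
    · exact ⟨SimpleGraph.Walk.nil, by simp⟩
  have hnpr : ¬ T.Adj p r := by
    intro hpr
    have : q = p := unique_nbr hac hconn2 (by simp [hrp, (hqr.ne : q ≠ r).symm])
      (by simp) (by simp) hqr.symm hpr.symm
    exact hpq.ne this.symm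
  -- seed embedding
  set S₀ : Finset VT := {r, q, p} with hS₀def
  set f₀ : VT → VG := fun z => if z = r then u' else if z = q then u else v with hf₀def
  have hf₀r : f₀ r = u' := by simp [hf₀def]
  have hf₀q : f₀ q = u := by simp [hf₀def, hqr.ne]
  have hf₀p : f₀ p = v := by simp [hf₀def, hrp.symm, hpq.ne]
  have hrq : r ≠ q := hqr.ne'
  have hqp : q ≠ p := hpq.ne'
  have hne1 : u' ≠ u := huu'.ne'
  have hne2 : u ≠ u' := huu'.ne
  have hne4 : v ≠ u' := hu'v.symm
  have hne5 : u ≠ v := hadj.ne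
  have hne6 : v ≠ u := hadj.ne'
  -- S₀ is T-connected
  have hconn0 : ∀ a ∈ S₀, ∀ b ∈ S₀, ∃ w : T.Walk a b, ∀ x ∈ w.support, x ∈ S₀ := by
    have toque : ∀ a ∈ S₀, ∃ w : T.Walk a q, ∀ x ∈ w.support, x ∈ S₀ := by
      intro a ha
      rw [hS₀def] at ha
      simp only [Finset.mem_insert, Finset.mem_singleton] at ha
      rcases ha with rfl | rfl | rfl
      · exact ⟨SimpleGraph.Walk.cons hqr.symm SimpleGraph.Walk.nil, by
          intro x hx; simp only [SimpleGraph.Walk.support_cons,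
            SimpleGraph.Walk.support_nil, List.mem_cons, List.mem_singleton] at hx
          rcases hx with rfl | rfl | h; · simp [hS₀def]
          · simp [hS₀def]
          · simp at h⟩
      · exact ⟨SimpleGraph.Walk.nil, by
          intro x hx; simp only [SimpleGraph.Walk.support_nil, List.mem_singleton] at hx
          subst hx; simp [hS₀def]⟩
      · exact ⟨SimpleGraph.Walk.cons hpq SimpleGraph.Walk.nil, by
          intro x hx; simp only [SimpleGraph.Walk.support_cons,
            SimpleGraph.Walk.support_nil, List.mem_cons, List.mem_singleton] at hx
          rcases hx with rfl | rfl | h; · simp [hS₀def]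
          · simp [hS₀def]
          · simp at h⟩
    intro a ha b hb
    obtain ⟨wa, hwa⟩ := toque a ha
    obtain ⟨wb, hwb⟩ := toque b hb
    refine ⟨wa.append wb.reverse, fun x hx => ?_⟩
    rw [SimpleGraph.Walk.mem_support_append_iff] at hx
    rcases hx with hx | hx
    · exact hwa x hx
    · rw [SimpleGraph.Walk.support_reverse, List.mem_reverse] at hx
      exact hwb x hx
  -- classification of the seed edges
  have hedge : ∀ a ∈ S₀, ∀ b ∈ S₀, T.Adj a b →
      (s(a, b) = s(q, r) ∧ c s(f₀ a, f₀ b) = α) ∨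
      (s(a, b) = s(p, q) ∧ c s(f₀ a, f₀ b) = β) := by
    intro a ha b hb hab
    rw [hS₀def] at ha hb
    simp only [Finset.mem_insert, Finset.mem_singleton] at ha hb
    rcases ha with rfl | rfl | rfl <;> rcases hb with rfl | rfl | rfl
    · exact absurd hab (T.irrefl)
    · refine Or.inl ⟨Sym2.eq_swap, ?_⟩
      rw [hf₀r, hf₀q, Sym2.eq_swap]; exact hu'col
    · exact absurd hab (fun h => hnpr h.symm)
    · exact Or.inl ⟨rfl, by rw [hf₀q, hf₀r]; exact hu'col⟩
    · exact absurd hab (T.irrefl)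
    · refine Or.inr ⟨Sym2.eq_swap, ?_⟩
      rw [hf₀q, hf₀p, Sym2.eq_swap, Sym2.eq_swap]
    · exact absurd hab hnpr
    · exact Or.inr ⟨rfl, by rw [hf₀p, hf₀q, Sym2.eq_swap]⟩
    · exact absurd hab (T.irrefl)
  -- the seed invariant
  have hI₀ : EmbInv T G c S₀ f₀ {α, β} := by
    constructor
    · intro a ha b hb heq
      simp only [Finset.mem_coe, hS₀def, Finset.mem_insert, Finset.mem_singleton] at ha hb
      rcases ha with rfl | rfl | rfl <;> rcases hb with rfl | rfl | rfl <;>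
        simp only [hf₀r, hf₀q, hf₀p] at heq <;>
        first
          | rfl
          | exact absurd heq hne1
          | exact absurd heq hne2
          | exact absurd heq hu'v
          | exact absurd heq hne4
          | exact absurd heq hne5
          | exact absurd heq hne6
    · intro a ha b hb hab
      rcases hedge a ha b hb hab with ⟨he, _⟩ | ⟨he, _⟩ <;>
        rcases Sym2.eq_iff.mp he with ⟨ha1, hb1⟩ | ⟨ha1, hb1⟩ <;> subst ha1 <;> subst hb1
      · rw [hf₀q, hf₀r]; exact huu'
      · rw [hf₀r, hf₀q]; exact huu'.symm
      · rw [hf₀p, hf₀q]; exact hadj.symm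
      · rw [hf₀q, hf₀p]; exact hadj
    · intro a ha b hb x hx y hy hab hxy hne
      rcases hedge a ha b hb hab with ⟨he1, hc1⟩ | ⟨he1, hc1⟩ <;>
        rcases hedge x hx y hy hxy with ⟨he2, hc2⟩ | ⟨he2, hc2⟩
      · exact absurd (he1.trans he2.symm) hne
      · rw [hc1, hc2]; exact hαβ
      · rw [hc1, hc2]; exact hαβ.symm
      · exact absurd (he1.trans he2.symm) hne
    · intro a ha b hb hab
      rcases hedge a ha b hb hab with ⟨_, hc⟩ | ⟨_, hc⟩ <;> rw [hc] <;> simp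
    · intro γ' hγ'
      simp only [Finset.mem_insert, Finset.mem_singleton] at hγ'
      rcases hγ' with rfl | rfl
      · exact ⟨q, by simp [hS₀def], r, by simp [hS₀def], hqr,
          by rw [hf₀q, hf₀r]; exact hu'col⟩
      · exact ⟨p, by simp [hS₀def], q, by simp [hS₀def], hpq,
          by rw [hf₀p, hf₀q, Sym2.eq_swap]⟩
    · have h2 : ({α, β} : Finset ℕ).card = 2 := Finset.card_pair hαβ
      have h3 : S₀.card = 3 := by
        rw [hS₀def, Finset.card_insert_of_notMem (by simp [hrq, hrp]),
          Finset.card_insert_of_notMem (by simp [hqp]), Finset.card_singleton]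
      omega
    · exact hconn0
  -- greedy extension to all of VT except ℓ
  have hℓS₀ : ℓ ∉ S₀ := by
    rw [hS₀def]
    simp only [Finset.mem_insert, Finset.mem_singleton]
    push_neg
    exact ⟨Ne.symm hrℓ, Ne.symm hqℓ, hℓp.ne⟩
  obtain ⟨f₁, U₁, hI₁, hagree₁, hUsub₁⟩ :=
    greedy hprop hreg hgirth hac hT.isConnected hk hTcard hℓu _ S₀ f₀ {α, β} hI₀ hℓS₀
      (by simp [hS₀def]) rfl
  have hf₁p : f₁ p = v := by rw [hagree₁ p (by simp [hS₀def]), hf₀p]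
  have herase : (Finset.univ.erase ℓ).card = k + 1 := by
    rw [Finset.card_erase_of_mem (Finset.mem_univ ℓ), Finset.card_univ, hTcard]
    omega
  have hαU₁ : α ∈ U₁ := hUsub₁ (by simp)
  have hfree : (pal G c v \ U₁).Nonempty := by
    by_contra hempty
    rw [Finset.not_nonempty_iff_eq_empty, Finset.sdiff_eq_empty_iff_subset] at hempty
    have hsub2 : pal G c v ⊆ U₁.erase α := Finset.subset_erase.mpr ⟨hempty, hαv⟩
    have hcle := Finset.card_le_card hsub2
    rw [pal_card hprop hreg, Finset.card_erase_of_mem hαU₁] at hcle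
    have hc1 := hI₁.cardU
    rw [herase] at hc1
    omega
  obtain ⟨γ, hγ⟩ := hfree
  rw [Finset.mem_sdiff] at hγ
  obtain ⟨f₂, hagree₂, hI₂⟩ := step hgirth hac hI₁ (le_of_eq herase)
    (Finset.notMem_erase ℓ _) (Finset.mem_erase.mpr ⟨hℓp.ne', Finset.mem_univ p⟩)
    hℓp.symm (by rw [hf₁p]; exact hγ.1) hγ.2
  rw [Finset.insert_erase (Finset.mem_univ ℓ)] at hI₂
  exact hnorb ⟨⟨f₂, fun a b hab => hI₂.inj (by simp) (by simp) hab⟩,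
    fun a b hab => hI₂.hom a (Finset.mem_univ a) b (Finset.mem_univ b) hab,
    fun a b x y h1 h2 hne => hI₂.rainbow a (Finset.mem_univ a) b (Finset.mem_univ b)
      x (Finset.mem_univ x) y (Finset.mem_univ y) h1 h2 hne⟩

end AntiRamseyAux

theorem stmt_4 {VT VG : Type} [Fintype VT] [Fintype VG] (k : ℕ) (hk : 2 ≤ k)
    (T : SimpleGraph VT) (hT : T.IsTree) (hTcard : Fintype.card VT = k + 2)
    (hTstar : ¬ IsStar T)
    (G : SimpleGraph VG) (hreg : ∀ v, (G.neighborSet v).ncard = k)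
    (hconn : G.Connected) (hgirth : ((k + 2 : ℕ) : ℕ∞) ≤ G.egirth)
    (h : ∃ c : Sym2 VG → ℕ, IsProperEdgeColoring G c ∧ ¬ HasRainbowCopy G c T) :
    ∃ c : Sym2 VG → Fin k, IsProperEdgeColoring G c := by
  classical
  obtain ⟨c, hprop, hnorb⟩ := h
  have hreg' : ∀ v, (G.neighborFinset v).card = k := by
    intro v
    have h1 := hreg v
    rw [SimpleGraph.neighborFinset_def, ← Set.ncard_eq_toFinset_card']
    exact h1
  have hpal_eq : ∀ u v : VG, G.Adj u v → pal G c u = pal G c v := by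
    intro u v huv
    apply Finset.Subset.antisymm
    · exact pal_subset hprop hreg' hgirth hT hTcard hTstar hk hnorb huv
    · exact pal_subset hprop hreg' hgirth hT hTcard hTstar hk hnorb huv.symm
  have hreach : ∀ u v : VG, G.Reachable u v → pal G c u = pal G c v := by
    intro u v hr
    obtain ⟨w⟩ := hr
    induction w with
    | nil => rfl
    | cons hadj _ ih => exact (hpal_eq _ _ hadj).trans ih
  obtain ⟨v₀⟩ := hconn.nonempty
  have hPcard : (pal G c v₀).card = k := pal_card hprop hreg' v₀
  have hmem : ∀ e ∈ G.edgeSet, c e ∈ pal G c v₀ := by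
    intro e he
    induction e with
    | h a b =>
      rw [SimpleGraph.mem_edgeSet] at he
      have h1 : c s(a, b) ∈ pal G c a := mem_pal'.mpr ⟨b, he, rfl⟩
      rw [hreach a v₀ (hconn.preconnected a v₀)] at h1
      exact h1
  refine ⟨fun e => if hc : c e ∈ pal G c v₀ then
    ((pal G c v₀).equivFinOfCardEq hPcard) ⟨c e, hc⟩ else ⟨0, by omega⟩, ?_⟩
  intro e₁ he₁ e₂ he₂ hne hshare hceq
  have h1 := hmem e₁ he₁
  have h2 := hmem e₂ he₂
  simp only [dif_pos h1, dif_pos h2] at hceq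
  have h3 : (⟨c e₁, h1⟩ : (pal G c v₀ : Finset ℕ)) = ⟨c e₂, h2⟩ :=
    ((pal G c v₀).equivFinOfCardEq hPcard).injective hceq
  exact hprop e₁ he₁ e₂ he₂ hne hshare (congrArg Subtype.val h3)
end

section
/- Let k be a positive integer and let G be a k-regular connected graph. If G has a cut-vertex, then G is not k-edge-colourable. -/
open SimpleGraph

/-- A finset admitting a fixed-point-free involution has even cardinality. -/
lemma even_card_of_fpf_invol {V : Type*} [DecidableEq V] (s : Finset V) (f : V → V)
    (hmap : ∀ v ∈ s, f v ∈ s) (hinv : ∀ v ∈ s, f (f v) = v) (hne : ∀ v ∈ s, f v ≠ v) :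
    Even s.card := by
  induction s using Finset.strongInduction with
  | _ s ih =>
    rcases s.eq_empty_or_nonempty with rfl | ⟨v, hv⟩
    · simp
    · have hfv : f v ∈ s := hmap v hv
      have hvfv : f v ≠ v := hne v hv
      set s' := (s.erase v).erase (f v) with hs'
      have hsub : s' ⊂ s := by
        refine Finset.ssubset_of_subset_of_ssubset ?_ (Finset.erase_ssubset hv)
        exact Finset.erase_subset _ _
      have hmem : ∀ u, u ∈ s' ↔ u ∈ s ∧ u ≠ v ∧ u ≠ f v := by
        intro u; simp [hs', Finset.mem_erase]; tauto
      have h1 : ∀ u ∈ s', f u ∈ s' := by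
        intro u hu
        obtain ⟨hus, huv, hufv⟩ := (hmem u).1 hu
        refine (hmem (f u)).2 ⟨hmap u hus, ?_, ?_⟩
        · intro h; exact hufv (by rw [← h, hinv u hus])
        · intro h
          have := congrArg f h
          rw [hinv u hus, hinv v hv] at this
          exact huv this
      have h2 : Even s'.card := by
        apply ih s' hsub (fun u hu => h1 u hu)
          (fun u hu => hinv u ((hmem u).1 hu).1) (fun u hu => hne u ((hmem u).1 hu).1)
      have hcard : s.card = s'.card + 2 := by
        rw [hs', Finset.card_erase_of_mem, Finset.card_erase_of_mem hv]
        · have : 2 ≤ s.card := by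
            have : ({v, f v} : Finset V) ⊆ s := by
              intro u hu; simp at hu; rcases hu with rfl | rfl <;> assumption
            calc 2 = ({v, f v} : Finset V).card := by
                    rw [Finset.card_insert_of_notMem (by simp [Ne.symm hvfv]),
                      Finset.card_singleton]
              _ ≤ s.card := Finset.card_le_card this
          omega
        · exact Finset.mem_erase.2 ⟨hvfv, hfv⟩
      rcases h2 with ⟨a, ha⟩
      exact ⟨a + 1, by omega⟩

/-- In a `k`-regular properly `k`-edge-coloured graph, every vertex has a unique
neighbour joined by an edge of each given colour. -/
lemma partner_exists' {V : Type} [Fintype V] [DecidableEq V] {k : ℕ} {G : SimpleGraph V}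
    [DecidableRel G.Adj] (hreg : ∀ v, (G.neighborSet v).ncard = k)
    {c : Sym2 V → Fin k} (hc : IsProperEdgeColoring G c) (v : V) (i : Fin k) :
    ∃ w, (G.Adj v w ∧ c s(v, w) = i) ∧ ∀ w', G.Adj v w' ∧ c s(v, w') = i → w' = w := by
  set t := G.neighborFinset v with ht
  have hinj : ∀ w₁ ∈ t, ∀ w₂ ∈ t, c s(v, w₁) = c s(v, w₂) → w₁ = w₂ := by
    intro w₁ h₁ w₂ h₂ hcc
    by_contra hne
    have ha₁ : G.Adj v w₁ := by rwa [ht, mem_neighborFinset] at h₁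
    have ha₂ : G.Adj v w₂ := by rwa [ht, mem_neighborFinset] at h₂
    refine hc s(v, w₁) ((G.mem_edgeSet).2 ha₁) s(v, w₂) ((G.mem_edgeSet).2 ha₂) ?_
      ⟨v, ?_, ?_⟩ hcc
    · simp [Sym2.congr_right]
      exact ⟨hne, fun h => by rw [← h] at ha₂; exact absurd ha₂ (G.loopless.irrefl v)⟩
    · exact Sym2.mem_mk_left v w₁
    · exact Sym2.mem_mk_left v w₂
  have hcardt : t.card = k := by
    rw [ht, neighborFinset_def, ← Set.ncard_eq_toFinset_card']
    exact hreg v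
  have himg : t.image (fun w => c s(v, w)) = Finset.univ := by
    apply Finset.eq_univ_of_card
    rw [Finset.card_image_of_injOn hinj, hcardt, Fintype.card_fin]
  have hi : i ∈ t.image (fun w => c s(v, w)) := by rw [himg]; exact Finset.mem_univ i
  obtain ⟨w, hw, hcw⟩ := Finset.mem_image.1 hi
  refine ⟨w, ⟨(mem_neighborFinset G v w).1 hw, hcw⟩, ?_⟩
  rintro w' ⟨ha', hc'⟩
  exact hinj w' ((mem_neighborFinset G v w').2 ha') w hw (by rw [hc', hcw])

theorem stmt_5 {V : Type} [Fintype V] (k : ℕ) (hk : 0 < k) (G : SimpleGraph V)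
    (hreg : ∀ v, (G.neighborSet v).ncard = k) (hconn : G.Connected)
    (x : V) (hx : ¬ (G.induce {x}ᶜ).Connected) :
    ¬ ∃ c : Sym2 V → Fin k, IsProperEdgeColoring G c := by
  classical
  rintro ⟨c, hc⟩
  choose P hP using partner_exists' hreg hc
  have hPadj : ∀ v i, G.Adj v (P v i) := fun v i => (hP v i).1.1
  have hPcol : ∀ v i, c s(v, P v i) = i := fun v i => (hP v i).1.2
  have hPuniq : ∀ v (i : Fin k) w, G.Adj v w → c s(v, w) = i → w = P v i :=
    fun v i w ha hcw => (hP v i).2 w ⟨ha, hcw⟩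
  have hPP : ∀ v i, P (P v i) i = v := by
    intro v i
    exact ((hP (P v i) i).2 v ⟨(hPadj v i).symm,
      by rw [Sym2.eq_swap]; exact hPcol v i⟩).symm
  -- trivial case: x is the only vertex
  by_cases hVx : ∀ v : V, v = x
  · have hemp : G.neighborSet x = ∅ := by
      ext w
      simp only [mem_neighborSet, Set.mem_empty_iff_false, iff_false]
      intro h
      rw [hVx w] at h
      exact G.loopless.irrefl x h
    have := hreg x
    rw [hemp, Set.ncard_empty] at this
    omega
  push_neg at hVx
  obtain ⟨a, hax⟩ := hVx
  have hNE : Nonempty ({x}ᶜ : Set V) := ⟨⟨a, by simp [hax]⟩⟩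
  rw [connected_iff] at hx
  push_neg at hx
  have hnp : ¬ (G.induce {x}ᶜ).Preconnected := fun h => (not_isEmpty_iff.2 hNE) (hx h)
  unfold SimpleGraph.Preconnected at hnp
  push_neg at hnp
  obtain ⟨A, B, hAB⟩ := hnp
  -- components of G − x containing A resp. B
  set E := G.induce ({x}ᶜ : Set V) with hE
  have hadjE : ∀ (u v : V) (hu : u ∈ ({x}ᶜ : Set V)) (hv : v ∈ ({x}ᶜ : Set V)),
      G.Adj u v → E.Adj ⟨u, hu⟩ ⟨v, hv⟩ := by
    intro u v hu hv h
    simpa [hE] using h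
  have key : ∀ (S : Set V), x ∉ S → (∀ u ∈ S, ∀ v, v ≠ x → G.Adj u v → v ∈ S) →
      ∀ (u : V) (w : G.Walk u x), u ∈ S → ∃ y, G.Adj x y ∧ y ∈ S := by
    intro S hxS hstep u w
    have gen : ∀ (u z : V) (w : G.Walk u z), z = x → u ∈ S → ∃ y, G.Adj x y ∧ y ∈ S := by
      intro u z w
      induction w with
      | nil => intro hz hu; rw [hz] at hu; exact absurd hu hxS
      | @cons u' b _ hadj p ih =>
        intro hz hu
        by_cases hbx : b = x
        · subst hbx; exact ⟨u', hadj.symm, hu⟩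
        · exact ih hz (hstep u' hu b hbx hadj)
    exact gen u x w rfl
  set S : Set V := {v | ∃ h : v ∈ ({x}ᶜ : Set V), E.Reachable A ⟨v, h⟩} with hS
  set S₂ : Set V := {v | ∃ h : v ∈ ({x}ᶜ : Set V), E.Reachable B ⟨v, h⟩} with hS₂
  have hxS : x ∉ S := by
    rintro ⟨h, -⟩; simp at h
  have hxS₂ : x ∉ S₂ := by
    rintro ⟨h, -⟩; simp at h
  have hstep : ∀ u ∈ S, ∀ v, v ≠ x → G.Adj u v → v ∈ S := by
    rintro u ⟨hu, hr⟩ v hvx hadj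
    have hv : v ∈ ({x}ᶜ : Set V) := by simp [hvx]
    exact ⟨hv, hr.trans (Adj.reachable (hadjE u v hu hv hadj))⟩
  have hstep₂ : ∀ u ∈ S₂, ∀ v, v ≠ x → G.Adj u v → v ∈ S₂ := by
    rintro u ⟨hu, hr⟩ v hvx hadj
    have hv : v ∈ ({x}ᶜ : Set V) := by simp [hvx]
    exact ⟨hv, hr.trans (Adj.reachable (hadjE u v hu hv hadj))⟩
  have hAS : (A : V) ∈ S := ⟨A.2, by rw [Subtype.coe_eta]⟩
  have hBS₂ : (B : V) ∈ S₂ := ⟨B.2, by rw [Subtype.coe_eta]⟩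
  obtain ⟨wA⟩ := hconn.preconnected (A : V) x
  obtain ⟨wB⟩ := hconn.preconnected (B : V) x
  obtain ⟨y₁, hy₁adj, hy₁S⟩ := key S hxS hstep (A : V) wA hAS
  obtain ⟨y₂, hy₂adj, hy₂S₂⟩ := key S₂ hxS₂ hstep₂ (B : V) wB hBS₂
  have hy₂S : y₂ ∉ S := by
    rintro ⟨h, hr⟩
    obtain ⟨h', hr'⟩ := hy₂S₂
    exact hAB (hr.trans hr'.symm)
  have hy12 : y₁ ≠ y₂ := fun h => hy₂S (h ▸ hy₁S)
  set i₁ := c s(x, y₁) with hi₁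
  set i₂ := c s(x, y₂) with hi₂
  have hi12 : i₁ ≠ i₂ := by
    refine hc s(x, y₁) ((G.mem_edgeSet).2 hy₁adj) s(x, y₂) ((G.mem_edgeSet).2 hy₂adj)
      ?_ ⟨x, Sym2.mem_mk_left x y₁, Sym2.mem_mk_left x y₂⟩
    simp [Sym2.congr_right]
    exact ⟨hy12, fun h => by rw [← h] at hy₂adj; exact absurd hy₂adj (G.loopless.irrefl x)⟩
  have hP1 : P x i₁ = y₁ := (hPuniq x i₁ y₁ hy₁adj rfl).symm
  have hP2 : P x i₂ = y₂ := (hPuniq x i₂ y₂ hy₂adj rfl).symm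
  set Sf := (Set.toFinite S).toFinset with hSf
  have hmemSf : ∀ v, v ∈ Sf ↔ v ∈ S := fun v => Set.Finite.mem_toFinset _
  -- |S| is even via colour i₂
  have heven : Even Sf.card := by
    apply even_card_of_fpf_invol Sf (fun v => P v i₂)
    · intro v hv
      rw [hmemSf] at hv ⊢
      have hnx : P v i₂ ≠ x := by
        intro h
        have : v = P x i₂ := by rw [← h, hPP]
        rw [hP2] at this
        exact hy₂S (this ▸ hv)
      exact hstep v hv (P v i₂) hnx (hPadj v i₂)
    · intro v _; exact hPP v i₂
    · intro v _; exact (G.ne_of_adj (hPadj v i₂)).symm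
  -- |S| is odd via colour i₁
  have hy₁Sf : y₁ ∈ Sf := (hmemSf y₁).2 hy₁S
  have hodd : Even (Sf.erase y₁).card := by
    apply even_card_of_fpf_invol _ (fun v => P v i₁)
    · intro v hv
      obtain ⟨hvy, hvS⟩ := Finset.mem_erase.1 hv
      rw [hmemSf] at hvS
      have hnx : P v i₁ ≠ x := by
        intro h
        have : v = P x i₁ := by rw [← h, hPP]
        rw [hP1] at this
        exact hvy this
      have hny : P v i₁ ≠ y₁ := by
        intro h
        have : v = P y₁ i₁ := by rw [← h, hPP]
        rw [← hP1, hPP] at this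
        exact hxS (this ▸ hvS)
      refine Finset.mem_erase.2 ⟨hny, ?_⟩
      rw [hmemSf]
      exact hstep v hvS (P v i₁) hnx (hPadj v i₁)
    · intro v _; exact hPP v i₁
    · intro v _; exact (G.ne_of_adj (hPadj v i₁)).symm
  rw [Finset.card_erase_of_mem hy₁Sf] at hodd
  have hpos : 1 ≤ Sf.card := Finset.card_pos.2 ⟨y₁, hy₁Sf⟩
  obtain ⟨m, hm⟩ := heven
  obtain ⟨n, hn⟩ := hodd
  omega
end

section
/- For every graph G with maximum degree at most 3, there exists a proper edge colouring of G with no rainbow copy of the 4-cycle C_4. -/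
open SimpleGraph

section Chains

variable {V : Type} 

/-- A 4-cycle `a-b-c-d-a`. -/
def IsSq (G : SimpleGraph V) (a b c d : V) : Prop :=
  G.Adj a b ∧ G.Adj b c ∧ G.Adj c d ∧ G.Adj d a ∧ a ≠ c ∧ b ≠ d

lemma IsSq.rot {G : SimpleGraph V} {a b c d : V} (h : IsSq G a b c d) : IsSq G b c d a :=
  ⟨h.2.1, h.2.2.1, h.2.2.2.1, h.1, h.2.2.2.2.2, (h.2.2.2.2.1).symm⟩

lemma IsSq.rev {G : SimpleGraph V} {a b c d : V} (h : IsSq G a b c d) : IsSq G d c b a :=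
  ⟨h.2.2.1.symm, h.2.1.symm, h.1.symm, h.2.2.2.1.symm, h.2.2.2.2.2.symm, h.2.2.2.2.1.symm⟩

/-- reversal in form (b,a,d,c) -/
lemma IsSq.rev2 {G : SimpleGraph V} {a b c d : V} (h : IsSq G a b c d) : IsSq G b a d c :=
  h.rev.rot.rot

/-- flip in form (a,d,c,b) -/
lemma IsSq.flip {G : SimpleGraph V} {a b c d : V} (h : IsSq G a b c d) : IsSq G a d c b :=
  h.rev.rot.rot.rot

/-- Opposite edges of a 4-cycle. -/
def OppE (G : SimpleGraph V) (e f : Sym2 V) : Prop :=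
  ∃ a b c d, IsSq G a b c d ∧ e = s(a, b) ∧ f = s(c, d)

lemma OppE.symm {G : SimpleGraph V} {e f : Sym2 V} (h : OppE G e f) : OppE G f e := by
  obtain ⟨a, b, c, d, hsq, he, hf⟩ := h
  exact ⟨c, d, a, b, hsq.rot.rot, hf, he⟩

lemma OppE_symmetric (G : SimpleGraph V) : Symmetric (OppE G) := fun _ _ h => h.symm

/-- A ladder chain of edges, consecutive ones opposite in a square. -/
def LCh (G : SimpleGraph V) (k : ℕ) (x y : ℕ → V) : Prop :=
  ∀ i < k, IsSq G (x i) (x (i+1)) (y (i+1)) (y i)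

lemma LCh_swap {G : SimpleGraph V} {k : ℕ} {x y : ℕ → V} (h : LCh G k x y) : LCh G k y x :=
  fun i hi => (h i hi).rev

lemma LCh_mono {G : SimpleGraph V} {k m : ℕ} {x y : ℕ → V} (h : LCh G k x y) (hm : m ≤ k) :
    LCh G m x y := fun i hi => h i (lt_of_lt_of_le hi hm)

lemma LCh_shift {G : SimpleGraph V} {k : ℕ} {x y : ℕ → V} (h : LCh G k x y) {i j : ℕ}
    (hij : i + j ≤ k) : LCh G j (fun t => x (i + t)) (fun t => y (i + t)) := by
  intro t ht
  exact h (i + t) (by omega)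

def HasK23 (G : SimpleGraph V) : Prop :=
  ∃ a b x y z, a ≠ b ∧ x ≠ y ∧ x ≠ z ∧ y ≠ z ∧
    G.Adj a x ∧ G.Adj a y ∧ G.Adj a z ∧ G.Adj b x ∧ G.Adj b y ∧ G.Adj b z

lemma four_nbrs [Fintype V] {G : SimpleGraph V} (h : MaxDegreeLE G 3) {z p q r s : V}
    (h1 : G.Adj z p) (h2 : G.Adj z q) (h3 : G.Adj z r) (h4 : G.Adj z s)
    (d1 : p ≠ q) (d2 : p ≠ r) (d3 : p ≠ s) (d4 : q ≠ r) (d5 : q ≠ s) (d6 : r ≠ s) : False := by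
  classical
  have hsub : ({p, q, r, s} : Set V) ⊆ G.neighborSet z := by
    intro v hv
    rcases hv with rfl | rfl | rfl | rfl <;> assumption
  have hcard : ({p, q, r, s} : Set V).ncard = 4 := by
    rw [Set.ncard_insert_of_notMem (by simp [d1, d2, d3]) (Set.toFinite _),
      Set.ncard_insert_of_notMem (by simp [d4, d5]) (Set.toFinite _),
      Set.ncard_insert_of_notMem (by simp [d6]) (Set.toFinite _), Set.ncard_singleton]
  have := Set.ncard_le_ncard hsub (Set.toFinite _)
  have := h z
  omega

lemma nbr_mem [Fintype V] {G : SimpleGraph V} (h : MaxDegreeLE G 3) {a x y z : V}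
    (hx : G.Adj a x) (hy : G.Adj a y) (hz : G.Adj a z)
    (dxy : x ≠ y) (dxz : x ≠ z) (dyz : y ≠ z) :
    ∀ v, G.Adj a v → v = x ∨ v = y ∨ v = z := by
  intro v hv
  by_contra h'
  push_neg at h'
  exact four_nbrs h hx hy hz hv dxy dxz (Ne.symm h'.1) dyz (Ne.symm h'.2.1) (Ne.symm h'.2.2)

lemma chain_key [Fintype V] {G : SimpleGraph V} (hdeg : MaxDegreeLE G 3) (hK : ¬ HasK23 G) :
    ∀ k (x y : ℕ → V), LCh G k x y →
      s(x 0, y 0) = s(x k, y k) ∨ ∀ v, v ∈ s(x 0, y 0) → v ∈ s(x k, y k) → False := by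
  intro k
  induction k using Nat.strong_induction_on with
  | _ k IH =>
  intro x y hch
  by_cases heq : s(x 0, y 0) = s(x k, y k)
  · exact Or.inl heq
  refine Or.inr ?_
  rcases Nat.eq_zero_or_pos k with rfl | hk
  · exact absurd rfl heq
  have aux : ∀ (x y : ℕ → V), LCh G k x y → s(x 0, y 0) ≠ s(x k, y k) →
      (x 0 = x k ∨ x 0 = y k) → False := by
    intro x y hch heq hcase
    have IH' : ∀ i j : ℕ, i ≤ j → j ≤ k → j - i < k →
        s(x i, y i) = s(x j, y j) ∨ (∀ v, v ∈ s(x i, y i) → v ∈ s(x j, y j) → False) := by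
      intro i j h1 h2 h3
      have hsh := LCh_shift hch (i := i) (j := j - i) (by omega)
      have hij : i + (j - i) = j := by omega
      have := IH (j - i) h3 _ _ hsh
      simpa [hij] using this
    have hq0 : IsSq G (x 0) (x 1) (y 1) (y 0) := hch 0 hk
    rcases Nat.lt_or_ge k 2 with hk2 | hk2
    · have hk1 : k = 1 := by omega
      subst hk1
      rcases hcase with h | h
      · exact (G.ne_of_adj hq0.1) h
      · exact hq0.2.2.2.2.1 h
    have hkk : k - 1 + 1 = k := by omega
    have hqk : IsSq G (x (k-1)) (x k) (y k) (y (k-1)) := by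
      have := hch (k-1) (by omega)
      rwa [hkk] at this
    rcases hcase with hzx | hzy
    · -- Case A : x 0 = x k
      by_cases h1 : y 0 = y k
      · exact heq (by rw [hzx, h1])
      by_cases h2 : y 0 = x (k-1)
      · rcases IH' 0 (k-1) (by omega) (by omega) (by omega) with he | hd
        · have hmem : (x k) ∈ s(x (k-1), y (k-1)) := by
            rw [← hzx, ← he]; exact Sym2.mem_mk_left _ _
          rcases Sym2.mem_iff.mp hmem with h | h
          · exact (G.ne_of_adj hqk.1) h.symm
          · exact hqk.2.2.2.2.2 h
        · exact hd (y 0) (Sym2.mem_mk_right _ _) (by rw [h2]; exact Sym2.mem_mk_left _ _)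
      by_cases h3 : x 1 = y k
      · rcases IH' 1 k (by omega) le_rfl (by omega) with he | hd
        · have hmem : (x 0) ∈ s(x 1, y 1) := by
            rw [he, hzx]; exact Sym2.mem_mk_left _ _
          rcases Sym2.mem_iff.mp hmem with h | h
          · exact (G.ne_of_adj hq0.1) h
          · exact hq0.2.2.2.2.1 h
        · exact hd (x 1) (Sym2.mem_mk_left _ _) (by rw [h3]; exact Sym2.mem_mk_right _ _)
      rcases Nat.lt_or_ge k 3 with hk3 | hk3
      · have hk2' : k = 2 := by omega
        subst hk2'
        have hqk' : IsSq G (x 1) (x 2) (y 2) (y 1) := by simpa using hqk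
        apply hK
        refine ⟨x 0, y 1, x 1, y 0, y 2, hq0.2.2.2.2.1,
          hq0.2.2.2.2.2, hqk'.2.2.2.2.1, h1, hq0.1,
          hq0.2.2.2.1.symm, by rw [hzx]; exact hqk'.2.1, hq0.2.1.symm, hq0.2.2.1,
          hqk'.2.2.1.symm⟩
      · by_cases h4 : x 1 = x (k-1)
        · rcases IH' 1 (k-1) (by omega) (by omega) (by omega) with he | hd
          · have hy : y 1 = y (k-1) := by
              rcases Sym2.eq_iff.mp he with ⟨_, h⟩ | ⟨hA, hB⟩
              · exact h
              · exact absurd (by rw [← hA, h4] : y (k-1) = x (k-1))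
                  (G.ne_of_adj hqk.2.2.2.1)
            set x' : ℕ → V := fun t => if t = 0 then x 0 else if t = 1 then x 1 else x k with hx'
            set y' : ℕ → V := fun t => if t = 0 then y 0 else if t = 1 then y 1 else y k with hy'
            have hch2 : LCh G 2 x' y' := by
              intro i hi
              interval_cases i
              · simpa [hx', hy'] using hq0
              · have : IsSq G (x 1) (x k) (y k) (y 1) := by rw [h4, hy]; exact hqk
                simpa [hx', hy'] using this
            rcases IH 2 (by omega) x' y' hch2 with he2 | hd2
            · exact heq (by simpa [hx', hy'] using he2)
            · refine hd2 (x 0) (by simp [hx', hy']) ?_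
              simp only [hx', hy']
              norm_num
              exact Or.inl hzx
          · exact hd (x 1) (Sym2.mem_mk_left _ _) (by rw [h4]; exact Sym2.mem_mk_left _ _)
        · exact four_nbrs hdeg (z := x 0) hq0.2.2.2.1.symm hq0.1
            (by rw [hzx]; exact hqk.2.1) (by rw [hzx]; exact hqk.1.symm)
            (hq0.2.2.2.2.2).symm h1 h2 h3 h4 hqk.2.2.2.2.1.symm
    · -- Case B : x 0 = y k
      by_cases h1 : y 0 = x k
      · exact heq (by rw [hzy, h1, Sym2.eq_swap])
      by_cases h2 : y 0 = y (k-1)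
      · rcases IH' 0 (k-1) (by omega) (by omega) (by omega) with he | hd
        · have hmem : (x 0) ∈ s(x (k-1), y (k-1)) := by
            rw [← he]; exact Sym2.mem_mk_left _ _
          rcases Sym2.mem_iff.mp hmem with h | h
          · exact hqk.2.2.2.2.1 (by rw [← h, hzy])
          · exact (G.ne_of_adj hqk.2.2.1) (by rw [← hzy, h])
        · exact hd (y 0) (Sym2.mem_mk_right _ _) (by rw [h2]; exact Sym2.mem_mk_right _ _)
      by_cases h3 : x 1 = x k
      · rcases IH' 1 k (by omega) le_rfl (by omega) with he | hd
        · have hmem : (x 0) ∈ s(x 1, y 1) := by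
            rw [he, hzy]; exact Sym2.mem_mk_right _ _
          rcases Sym2.mem_iff.mp hmem with h | h
          · exact (G.ne_of_adj hq0.1) h
          · exact hq0.2.2.2.2.1 h
        · exact hd (x 1) (Sym2.mem_mk_left _ _) (by rw [h3]; exact Sym2.mem_mk_left _ _)
      by_cases h4 : x 1 = y (k-1)
      · rcases Nat.lt_or_ge k 3 with hk3 | hk3
        · have hk2' : k = 2 := by omega
          subst hk2'
          have h4' : x 1 = y 1 := by simpa using h4
          exact (G.ne_of_adj hq0.2.1) h4'
        · rcases IH' 1 (k-1) (by omega) (by omega) (by omega) with he | hd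
          · have hyx : y 1 = x (k-1) := by
              rcases Sym2.eq_iff.mp he with ⟨hA, hB⟩ | ⟨hA, hB⟩
              · exact absurd (by rw [← h4, hA] : y (k-1) = x (k-1))
                  (G.ne_of_adj hqk.2.2.2.1)
              · exact hB
            have hsq2 : IsSq G (x 1) (y k) (x k) (y 1) := by
              have := hqk.rev
              rwa [← h4, ← hyx] at this
            set x' : ℕ → V := fun t => if t = 0 then x 0 else if t = 1 then x 1 else y k with hx'
            set y' : ℕ → V := fun t => if t = 0 then y 0 else if t = 1 then y 1 else x k with hy'
            have hch2 : LCh G 2 x' y' := by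
              intro i hi
              interval_cases i
              · simpa [hx', hy'] using hq0
              · simpa [hx', hy'] using hsq2
            rcases IH 2 (by omega) x' y' hch2 with he2 | hd2
            · apply heq
              have h5 : s(x 0, y 0) = s(y k, x k) := by simpa [hx', hy'] using he2
              rw [h5, Sym2.eq_swap]
            · refine hd2 (x 0) (by simp [hx', hy']) ?_
              simp only [hx', hy']
              norm_num
              exact Or.inl hzy
          · exact hd (x 1) (Sym2.mem_mk_left _ _) (by rw [h4]; exact Sym2.mem_mk_right _ _)
      · exact four_nbrs hdeg (z := x 0) hq0.2.2.2.1.symm hq0.1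
          (by rw [hzy]; exact hqk.2.1.symm) (by rw [hzy]; exact hqk.2.2.1)
          (hq0.2.2.2.2.2).symm h1 h2 h3 h4 hqk.2.2.2.2.2
  intro v hv0 hvk
  rcases Sym2.mem_iff.mp hv0 with rfl | rfl
  · rcases Sym2.mem_iff.mp hvk with h | h
    · exact aux x y hch heq (Or.inl h)
    · exact aux x y hch heq (Or.inr h)
  · have heq' : s(y 0, x 0) ≠ s(y k, x k) := fun h' => heq (by
      rw [show s(x 0, y 0) = s(y 0, x 0) from Sym2.eq_swap, h', Sym2.eq_swap])
    rcases Sym2.mem_iff.mp hvk with h | h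
    · exact aux y x (LCh_swap hch) heq' (Or.inr h)
    · exact aux y x (LCh_swap hch) heq' (Or.inl h)

lemma eqvGen_to_rtg {α : Type*} {r : α → α → Prop} (hs : Symmetric r) {a b : α}
    (h : Relation.EqvGen r a b) : Relation.ReflTransGen r a b := by
  induction h with
  | rel x y h => exact Relation.ReflTransGen.single h
  | refl x => exact Relation.ReflTransGen.refl
  | symm x y _ ih => exact (haveI : Std.Symm r := ⟨fun _ _ h => hs h⟩; Std.Symm.symm _ _ ih)
  | trans x y z _ _ ih1 ih2 => exact ih1.trans ih2

lemma rtg_to_chain {G : SimpleGraph V} {e f : Sym2 V}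
    (h : Relation.ReflTransGen (OppE G) e f) :
    ∃ k x y, LCh G k x y ∧ e = s(x 0, y 0) ∧ f = s(x k, y k) := by
  induction h with
  | refl =>
    induction e using Sym2.ind with
    | _ p q =>
      exact ⟨0, fun _ => p, fun _ => q, fun i hi => absurd hi (Nat.not_lt_zero i), rfl, rfl⟩
  | tail _ hbc ih =>
    obtain ⟨k, x, y, hch, he, hb⟩ := ih
    obtain ⟨a', b', c', d', hsq, hb', hc'⟩ := hbc
    have hmatch : s(x k, y k) = s(a', b') := by rw [← hb, hb']
    rcases Sym2.eq_iff.mp hmatch with ⟨h1, h2⟩ | ⟨h1, h2⟩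
    · -- x k = a', y k = b' ; use flipped square (a', d', c', b')
      refine ⟨k + 1, fun t => if t ≤ k then x t else d', fun t => if t ≤ k then y t else c',
        ?_, ?_, ?_⟩
      · intro i hi
        rcases Nat.lt_or_ge i k with hik | hik
        · have e1 : i ≤ k := le_of_lt hik
          have e2 : i + 1 ≤ k := hik
          simpa [e1, e2] using hch i hik
        · have hik' : i = k := by omega
          subst hik'
          have e1 : i ≤ i := le_rfl
          have e2 : ¬ (i + 1 ≤ i) := by omega
          have hgoal : IsSq G (x i) d' c' (y i) := by
            rw [h1, h2]; exact hsq.flip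
          simpa [e1, e2] using hgoal
      · simpa [Nat.zero_le] using he
      · have e2 : ¬ (k + 1 ≤ k) := by omega
        simp only [e2, if_false]
        rw [hc', Sym2.eq_swap]
    · -- x k = b', y k = a' ; use rotated square (b', c', d', a')
      refine ⟨k + 1, fun t => if t ≤ k then x t else c', fun t => if t ≤ k then y t else d',
        ?_, ?_, ?_⟩
      · intro i hi
        rcases Nat.lt_or_ge i k with hik | hik
        · have e1 : i ≤ k := le_of_lt hik
          have e2 : i + 1 ≤ k := hik
          simpa [e1, e2] using hch i hik
        · have hik' : i = k := by omega
          subst hik'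
          have e1 : i ≤ i := le_rfl
          have e2 : ¬ (i + 1 ≤ i) := by omega
          have hgoal : IsSq G (x i) c' d' (y i) := by
            rw [h1, h2]; exact hsq.rot
          simpa [e1, e2] using hgoal
      · simpa [Nat.zero_le] using he
      · have e2 : ¬ (k + 1 ≤ k) := by omega
        simp only [e2, if_false]
        exact hc'

lemma nice_coloring [Fintype V] (G : SimpleGraph V) (hdeg : MaxDegreeLE G 3)
    (hK : ¬ HasK23 G) :
    ∃ c : Sym2 V → ℕ, IsProperEdgeColoring G c ∧
      ¬ HasRainbowCopy G c (SimpleGraph.cycleGraph 4) := by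
  have hfin : Finite (Quot (OppE G)) :=
    Finite.of_surjective (Quot.mk (OppE G)) Quot.mk_surjective
  obtain ⟨ι, hι⟩ := (countable_iff_exists_injective (Quot (OppE G))).mp inferInstance
  refine ⟨fun e => ι (Quot.mk _ e), ?_, ?_⟩
  · intro e1 _ e2 _ hne hshare hcc
    have hQ : Quot.mk (OppE G) e1 = Quot.mk (OppE G) e2 := hι hcc
    have hE := Quot.eqvGen_exact hQ
    obtain ⟨k, x, y, hch, he, hf⟩ := rtg_to_chain (eqvGen_to_rtg (OppE_symmetric G) hE)
    rcases chain_key hdeg hK k x y hch with h | h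
    · exact hne (by rw [he, hf, h])
    · obtain ⟨v, hv1, hv2⟩ := hshare
      exact h v (he ▸ hv1) (hf ▸ hv2)
  · rintro ⟨f, hhom, hrb⟩
    have hsq : IsSq G (f 0) (f 1) (f 2) (f 3) :=
      ⟨hhom 0 1 (by decide), hhom 1 2 (by decide), hhom 2 3 (by decide),
        hhom 3 0 (by decide), f.injective.ne (by decide), f.injective.ne (by decide)⟩
    have hopp : OppE G s(f 0, f 1) s(f 2, f 3) := ⟨f 0, f 1, f 2, f 3, hsq, rfl, rfl⟩
    exact hrb 0 1 2 3 (by decide) (by decide) (by decide)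
      (congrArg ι (Quot.sound hopp))


lemma pigeon3 (a b c d : Fin 3) (h1 : a ≠ b) (h2 : b ≠ c) (h3 : c ≠ d) (h4 : d ≠ a) :
    a = c ∨ b = d := by revert a b c d; decide

lemma s_ne {a b c : V} (h : a ≠ c) : s(a, b) ≠ s(b, c) := by
  intro h'
  rcases Sym2.eq_iff.mp h' with ⟨h1, h2⟩ | ⟨h1, h2⟩
  · exact h (h1.trans h2)
  · exact h h1

lemma cyc4_edges : ∀ u v : Fin 4, (SimpleGraph.cycleGraph 4).Adj u v →
    s(u, v) = s((0:Fin 4), 1) ∨ s(u, v) = s((1:Fin 4), 2) ∨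
    s(u, v) = s((2:Fin 4), 3) ∨ s(u, v) = s((3:Fin 4), 0) := by decide

lemma combine [Fintype V] (G : SimpleGraph V) (E0 : Set (Sym2 V))
    (ch : Sym2 V → Fin 3)
    (hprop : ∀ e1 ∈ E0, ∀ e2 ∈ E0, e1 ≠ e2 → (∃ v, v ∈ e1 ∧ v ∈ e2) → ch e1 ≠ ch e2)
    (hclose : ∀ v0 v1 v2 v3, IsSq G v0 v1 v2 v3 → s(v0, v1) ∈ E0 →
      s(v1, v2) ∈ E0 ∧ s(v2, v3) ∈ E0 ∧ s(v3, v0) ∈ E0)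
    (c' : Sym2 V → ℕ)
    (hc' : IsProperEdgeColoring (G.deleteEdges E0) c')
    (hr' : ¬ HasRainbowCopy (G.deleteEdges E0) c' (SimpleGraph.cycleGraph 4)) :
    ∃ c : Sym2 V → ℕ, IsProperEdgeColoring G c ∧
      ¬ HasRainbowCopy G c (SimpleGraph.cycleGraph 4) := by
  classical
  refine ⟨fun e => if e ∈ E0 then 2 * (ch e).val + 1 else 2 * c' e, ?_, ?_⟩
  · intro e1 he1 e2 he2 hne hsh
    by_cases m1 : e1 ∈ E0 <;> by_cases m2 : e2 ∈ E0 <;> simp only [m1, m2, if_pos, if_neg,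
      if_true, if_false]
    · have := hprop e1 m1 e2 m2 hne hsh
      intro h
      have : (ch e1).val = (ch e2).val := by omega
      exact hprop e1 m1 e2 m2 hne hsh (Fin.val_injective this)
    · omega
    · omega
    · have h1 : e1 ∈ (G.deleteEdges E0).edgeSet := by
        rw [SimpleGraph.edgeSet_deleteEdges]; exact ⟨he1, m1⟩
      have h2 : e2 ∈ (G.deleteEdges E0).edgeSet := by
        rw [SimpleGraph.edgeSet_deleteEdges]; exact ⟨he2, m2⟩
      have := hc' e1 h1 e2 h2 hne hsh
      omega
  · rintro ⟨f, hhom, hrb⟩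
    have hsq : IsSq G (f 0) (f 1) (f 2) (f 3) :=
      ⟨hhom 0 1 (by decide), hhom 1 2 (by decide), hhom 2 3 (by decide),
        hhom 3 0 (by decide), f.injective.ne (by decide), f.injective.ne (by decide)⟩
    have hne01 : f 0 ≠ f 1 := G.ne_of_adj hsq.1
    have hne12 : f 1 ≠ f 2 := G.ne_of_adj hsq.2.1
    have hne23 : f 2 ≠ f 3 := G.ne_of_adj hsq.2.2.1
    have hne30 : f 3 ≠ f 0 := G.ne_of_adj hsq.2.2.2.1
    by_cases hany : s(f 0, f 1) ∈ E0 ∨ s(f 1, f 2) ∈ E0 ∨ s(f 2, f 3) ∈ E0 ∨ s(f 3, f 0) ∈ E0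
    · have hall : s(f 0, f 1) ∈ E0 ∧ s(f 1, f 2) ∈ E0 ∧ s(f 2, f 3) ∈ E0 ∧ s(f 3, f 0) ∈ E0 := by
        rcases hany with h | h | h | h
        · obtain ⟨a1, a2, a3⟩ := hclose _ _ _ _ hsq h
          exact ⟨h, a1, a2, a3⟩
        · obtain ⟨a1, a2, a3⟩ := hclose _ _ _ _ hsq.rot h
          exact ⟨a3, h, a1, a2⟩
        · obtain ⟨a1, a2, a3⟩ := hclose _ _ _ _ hsq.rot.rot h
          exact ⟨a2, a3, h, a1⟩
        · obtain ⟨a1, a2, a3⟩ := hclose _ _ _ _ hsq.rot.rot.rot h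
          exact ⟨a1, a2, a3, h⟩
      obtain ⟨hm01, hm12, hm23, hm30⟩ := hall
      have n1 : ch s(f 0, f 1) ≠ ch s(f 1, f 2) :=
        hprop _ hm01 _ hm12 (s_ne hsq.2.2.2.2.1) ⟨f 1, by simp, by simp⟩
      have n2 : ch s(f 1, f 2) ≠ ch s(f 2, f 3) :=
        hprop _ hm12 _ hm23 (s_ne hsq.2.2.2.2.2) ⟨f 2, by simp, by simp⟩
      have n3 : ch s(f 2, f 3) ≠ ch s(f 3, f 0) :=
        hprop _ hm23 _ hm30 (s_ne hsq.2.2.2.2.1.symm) ⟨f 3, by simp, by simp⟩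
      have n4 : ch s(f 3, f 0) ≠ ch s(f 0, f 1) :=
        hprop _ hm30 _ hm01 (s_ne hsq.2.2.2.2.2.symm) ⟨f 0, by simp, by simp⟩
      rcases pigeon3 _ _ _ _ n1 n2 n3 n4 with h | h
      · exact hrb 0 1 2 3 (by decide) (by decide) (by decide)
          (by simp only [if_pos hm01, if_pos hm23, h])
      · exact hrb 1 2 3 0 (by decide) (by decide) (by decide)
          (by simp only [if_pos hm12, if_pos hm30, h])
    · push_neg at hany
      obtain ⟨h01, h12, h23, h30⟩ := hany
      have key : ∀ u v : Fin 4, (SimpleGraph.cycleGraph 4).Adj u v →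
          G.Adj (f u) (f v) ∧ s(f u, f v) ∉ E0 := by
        intro u v huv
        refine ⟨hhom u v huv, ?_⟩
        rcases cyc4_edges u v huv with h | h | h | h <;>
          rcases Sym2.eq_iff.mp h with ⟨hu, hv⟩ | ⟨hu, hv⟩ <;>
          subst hu <;> subst hv <;>
          first
            | exact h01 | exact h12 | exact h23 | exact h30
            | (rw [Sym2.eq_swap]; assumption)
      have hom' : ∀ u v : Fin 4, (SimpleGraph.cycleGraph 4).Adj u v →
          (G.deleteEdges E0).Adj (f u) (f v) := by
        intro u v huv
        rw [SimpleGraph.deleteEdges_adj]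
        exact key u v huv
      have hnr : ¬ ∀ u v x' y', (SimpleGraph.cycleGraph 4).Adj u v →
          (SimpleGraph.cycleGraph 4).Adj x' y' → s(u, v) ≠ s(x', y') →
          c' s(f u, f v) ≠ c' s(f x', f y') := fun hrb' => hr' ⟨f, hom', hrb'⟩
      push_neg at hnr
      obtain ⟨u, v, x', y', hu1, hu2, hu3, hu4⟩ := hnr
      refine hrb u v x' y' hu1 hu2 hu3 ?_
      have k1 := key u v hu1
      have k2 := key x' y' hu2
      simp only [if_neg k1.2, if_neg k2.2, hu4]


def EZ (G : SimpleGraph V) (A B : Set V) : Set (Sym2 V) :=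
  {e | e ∈ G.edgeSet ∧ ∃ p ∈ A, ∃ q ∈ B, e = s(p, q)}

def ell [DecidableEq V] (a b w x y : V) : V → Fin 3 := fun v =>
  if v = a then 0 else if v = b then 1 else if v = w then 2
  else if v = x then 0 else if v = y then 1 else 2

def chF [DecidableEq V] (a b w x y : V) : Sym2 V → Fin 3 :=
  Sym2.lift ⟨fun p q => ell a b w x y p + ell a b w x y q, fun _ _ => add_comm _ _⟩

lemma EZ_proper [DecidableEq V] {G : SimpleGraph V} {a b w x y z : V}
    (hAB : ∀ p ∈ ({a, b, w} : Set V), ∀ q ∈ ({x, y, z} : Set V), p ≠ q)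
    (hAinj : ∀ p ∈ ({a, b, w} : Set V), ∀ p' ∈ ({a, b, w} : Set V), p ≠ p' →
      ell a b w x y p ≠ ell a b w x y p')
    (hBinj : ∀ q ∈ ({x, y, z} : Set V), ∀ q' ∈ ({x, y, z} : Set V), q ≠ q' →
      ell a b w x y q ≠ ell a b w x y q') :
    ∀ e1 ∈ EZ G {a, b, w} {x, y, z}, ∀ e2 ∈ EZ G {a, b, w} {x, y, z}, e1 ≠ e2 →
      (∃ v, v ∈ e1 ∧ v ∈ e2) → chF a b w x y e1 ≠ chF a b w x y e2 := by
  rintro e1 ⟨he1, p1, hp1, q1, hq1, rfl⟩ e2 ⟨he2, p2, hp2, q2, hq2, rfl⟩ hne ⟨v, hv1, hv2⟩ hcc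
  simp only [chF, Sym2.lift_mk] at hcc
  rcases Sym2.mem_iff.mp hv1 with h1 | h1 <;> rcases Sym2.mem_iff.mp hv2 with h2 | h2
  · have hpp : p1 = p2 := by rw [← h1]; exact h2
    have hq : q1 ≠ q2 := fun hh => hne (by rw [hpp, hh])
    rw [hpp] at hcc
    exact hBinj q1 hq1 q2 hq2 hq (add_left_cancel hcc)
  · exact (hAB p1 hp1 q2 hq2) (by rw [← h1]; exact h2)
  · exact (hAB p2 hp2 q1 hq1) (by rw [← h2]; exact h1)
  · have hqq : q1 = q2 := by rw [← h1]; exact h2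
    have hp : p1 ≠ p2 := fun hh => hne (by rw [hqq, hh])
    rw [hqq] at hcc
    exact hAinj p1 hp1 p2 hp2 hp (add_right_cancel hcc)

lemma EZ_close_of_norm {G : SimpleGraph V} {A B : Set V}
    (hnorm : ∀ v0 v1 v2 v3, IsSq G v0 v1 v2 v3 → v0 ∈ A → v1 ∈ B → v2 ∈ A ∧ v3 ∈ B) :
    ∀ v0 v1 v2 v3, IsSq G v0 v1 v2 v3 → s(v0, v1) ∈ EZ G A B →
      s(v1, v2) ∈ EZ G A B ∧ s(v2, v3) ∈ EZ G A B ∧ s(v3, v0) ∈ EZ G A B := by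
  intro v0 v1 v2 v3 hsq hm
  obtain ⟨he, p, hp, q, hq, heq⟩ := hm
  rcases Sym2.eq_iff.mp heq with ⟨h1, h2⟩ | ⟨h1, h2⟩
  · rw [← h1] at hp; rw [← h2] at hq
    obtain ⟨h2A, h3B⟩ := hnorm _ _ _ _ hsq hp hq
    exact ⟨⟨G.mem_edgeSet.mpr hsq.2.1, v2, h2A, v1, hq, Sym2.eq_swap⟩,
      ⟨G.mem_edgeSet.mpr hsq.2.2.1, v2, h2A, v3, h3B, rfl⟩,
      ⟨G.mem_edgeSet.mpr hsq.2.2.2.1, v0, hp, v3, h3B, Sym2.eq_swap⟩⟩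
  · rw [← h2] at hp; rw [← h1] at hq
    obtain ⟨h3A, h2B⟩ := hnorm _ _ _ _ hsq.rev2 hp hq
    exact ⟨⟨G.mem_edgeSet.mpr hsq.2.1, v1, hp, v2, h2B, rfl⟩,
      ⟨G.mem_edgeSet.mpr hsq.2.2.1, v3, h3A, v2, h2B, Sym2.eq_swap⟩,
      ⟨G.mem_edgeSet.mpr hsq.2.2.2.1, v3, h3A, v0, hq, rfl⟩⟩

lemma norm3 [Fintype V] {G : SimpleGraph V} (hdeg : MaxDegreeLE G 3) {a b w x y z : V}
    (hab : a ≠ b) (hwa : w ≠ a) (hwb : w ≠ b)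
    (hxy : x ≠ y) (hxz : x ≠ z) (hyz : y ≠ z)
    (hax : G.Adj a x) (hay : G.Adj a y) (haz : G.Adj a z)
    (hbx : G.Adj b x) (hby : G.Adj b y) (hbz : G.Adj b z)
    (hwx : G.Adj w x) (hwy : G.Adj w y) :
    ∀ v0 v1 v2 v3, IsSq G v0 v1 v2 v3 → v0 ∈ ({a, b, w} : Set V) →
      v1 ∈ ({x, y, z} : Set V) →
      v2 ∈ ({a, b, w} : Set V) ∧ v3 ∈ ({x, y, z} : Set V) := by
  intro v0 v1 v2 v3 hsq hv0 hv1
  obtain ⟨h01, h12, h23, h30, h02, h13⟩ := hsq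
  simp only [Set.mem_insert_iff, Set.mem_singleton_iff] at hv0 hv1
  have NA : ∀ v, G.Adj a v → v = x ∨ v = y ∨ v = z := nbr_mem hdeg hax hay haz hxy hxz hyz
  have NB : ∀ v, G.Adj b v → v = x ∨ v = y ∨ v = z := nbr_mem hdeg hbx hby hbz hxy hxz hyz
  have NX : ∀ v, G.Adj x v → v = a ∨ v = b ∨ v = w :=
    nbr_mem hdeg hax.symm hbx.symm hwx.symm hab (Ne.symm hwa) (Ne.symm hwb)
  have NY : ∀ v, G.Adj y v → v = a ∨ v = b ∨ v = w :=
    nbr_mem hdeg hay.symm hby.symm hwy.symm hab (Ne.symm hwa) (Ne.symm hwb)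
  have h2A : v2 ∈ ({a, b, w} : Set V) := by
    rcases hv1 with h1 | h1 | h1
    · rw [h1] at h12; rcases NX v2 h12 with h | h | h <;> simp [h]
    · rw [h1] at h12; rcases NY v2 h12 with h | h | h <;> simp [h]
    · rcases hv0 with h0 | h0 | h0
      · rw [h0] at h30
        rcases NA v3 h30.symm with h | h | h
        · rw [h] at h23; rcases NX v2 h23.symm with h' | h' | h' <;> simp [h']
        · rw [h] at h23; rcases NY v2 h23.symm with h' | h' | h' <;> simp [h']
        · exact absurd (h1.trans h.symm) h13
      · rw [h0] at h30
        rcases NB v3 h30.symm with h | h | h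
        · rw [h] at h23; rcases NX v2 h23.symm with h' | h' | h' <;> simp [h']
        · rw [h] at h23; rcases NY v2 h23.symm with h' | h' | h' <;> simp [h']
        · exact absurd (h1.trans h.symm) h13
      · have hwz : G.Adj w z := by rw [← h0, ← h1]; exact h01
        have NZ : ∀ v, G.Adj z v → v = a ∨ v = b ∨ v = w :=
          nbr_mem hdeg haz.symm hbz.symm hwz.symm hab (Ne.symm hwa) (Ne.symm hwb)
        rw [h1] at h12
        rcases NZ v2 h12 with h | h | h <;> simp [h]
  refine ⟨h2A, ?_⟩
  simp only [Set.mem_insert_iff, Set.mem_singleton_iff] at h2A ⊢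
  rcases hv0 with h0 | h0 | h0
  · rw [h0] at h30; rcases NA v3 h30.symm with h | h | h <;> simp [h]
  · rw [h0] at h30; rcases NB v3 h30.symm with h | h | h <;> simp [h]
  · rcases h2A with h | h | h
    · rw [h] at h23; rcases NA v3 h23 with h' | h' | h' <;> simp [h']
    · rw [h] at h23; rcases NB v3 h23 with h' | h' | h' <;> simp [h']
    · exact absurd (h0.trans h.symm) h02


lemma norm2 [Fintype V] {G : SimpleGraph V} (hdeg : MaxDegreeLE G 3) {a b x y z : V}
    (hxy : x ≠ y) (hxz : x ≠ z) (hyz : y ≠ z)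
    (hax : G.Adj a x) (hay : G.Adj a y) (haz : G.Adj a z)
    (hbx : G.Adj b x) (hby : G.Adj b y) (hbz : G.Adj b z)
    (hno : ∀ v, v ≠ a → v ≠ b →
      ¬(G.Adj v x ∧ G.Adj v y) ∧ ¬(G.Adj v x ∧ G.Adj v z) ∧ ¬(G.Adj v y ∧ G.Adj v z)) :
    ∀ v0 v1 v2 v3, IsSq G v0 v1 v2 v3 → v0 ∈ ({a, b, b} : Set V) →
      v1 ∈ ({x, y, z} : Set V) →
      v2 ∈ ({a, b, b} : Set V) ∧ v3 ∈ ({x, y, z} : Set V) := by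
  intro v0 v1 v2 v3 hsq hv0 hv1
  obtain ⟨h01, h12, h23, h30, h02, h13⟩ := hsq
  simp only [Set.mem_insert_iff, Set.mem_singleton_iff] at hv0 hv1 ⊢
  have NA : ∀ v, G.Adj a v → v = x ∨ v = y ∨ v = z := nbr_mem hdeg hax hay haz hxy hxz hyz
  have NB : ∀ v, G.Adj b v → v = x ∨ v = y ∨ v = z := nbr_mem hdeg hbx hby hbz hxy hxz hyz
  have h3B : v3 = x ∨ v3 = y ∨ v3 = z := by
    rcases hv0 with h0 | h0 | h0
    · rw [h0] at h30; exact NA v3 h30.symm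
    · rw [h0] at h30; exact NB v3 h30.symm
    · rw [h0] at h30; exact NB v3 h30.symm
  refine ⟨?_, h3B⟩
  by_contra hc
  push_neg at hc
  obtain ⟨hca, hcb, _⟩ := hc
  have hv2 : G.Adj v2 v1 := h12.symm
  have hv3 : G.Adj v2 v3 := h23
  obtain ⟨nxy, nxz, nyz⟩ := hno v2 hca hcb
  rcases hv1 with h1 | h1 | h1 <;> rcases h3B with h3 | h3 | h3
  · exact h13 (h1.trans h3.symm)
  · rw [h1] at hv2; rw [h3] at hv3; exact nxy ⟨hv2, hv3⟩
  · rw [h1] at hv2; rw [h3] at hv3; exact nxz ⟨hv2, hv3⟩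
  · rw [h1] at hv2; rw [h3] at hv3; exact nxy ⟨hv3, hv2⟩
  · exact h13 (h1.trans h3.symm)
  · rw [h1] at hv2; rw [h3] at hv3; exact nyz ⟨hv2, hv3⟩
  · rw [h1] at hv2; rw [h3] at hv3; exact nxz ⟨hv3, hv2⟩
  · rw [h1] at hv2; rw [h3] at hv3; exact nyz ⟨hv3, hv2⟩
  · exact h13 (h1.trans h3.symm)

lemma maxdeg_delete [Fintype V] {G : SimpleGraph V} (h : MaxDegreeLE G 3)
    (E0 : Set (Sym2 V)) : MaxDegreeLE (G.deleteEdges E0) 3 := by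
  intro v
  refine le_trans (Set.ncard_le_ncard ?_ (Set.toFinite _)) (h v)
  intro u hu
  exact (SimpleGraph.deleteEdges_adj.mp hu).1

lemma step_s12 [Fintype V] [DecidableEq V] {G : SimpleGraph V} {n : ℕ}
    (hdeg : MaxDegreeLE G 3) (hn : G.edgeSet.ncard = n)
    {a b w x y z : V}
    (hax : G.Adj a x)
    (hAB : ∀ p ∈ ({a, b, w} : Set V), ∀ q ∈ ({x, y, z} : Set V), p ≠ q)
    (hAinj : ∀ p ∈ ({a, b, w} : Set V), ∀ p' ∈ ({a, b, w} : Set V), p ≠ p' →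
      ell a b w x y p ≠ ell a b w x y p')
    (hBinj : ∀ q ∈ ({x, y, z} : Set V), ∀ q' ∈ ({x, y, z} : Set V), q ≠ q' →
      ell a b w x y q ≠ ell a b w x y q')
    (hnorm : ∀ v0 v1 v2 v3, IsSq G v0 v1 v2 v3 → v0 ∈ ({a, b, w} : Set V) →
      v1 ∈ ({x, y, z} : Set V) → v2 ∈ ({a, b, w} : Set V) ∧ v3 ∈ ({x, y, z} : Set V))
    (IH : ∀ m < n, ∀ H : SimpleGraph V, H.edgeSet.ncard = m → MaxDegreeLE H 3 →
      ∃ c : Sym2 V → ℕ, IsProperEdgeColoring H c ∧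
        ¬ HasRainbowCopy H c (SimpleGraph.cycleGraph 4)) :
    ∃ c : Sym2 V → ℕ, IsProperEdgeColoring G c ∧
      ¬ HasRainbowCopy G c (SimpleGraph.cycleGraph 4) := by
  set E0 := EZ G {a, b, w} {x, y, z} with hE0
  have hmem : s(a, x) ∈ E0 := ⟨G.mem_edgeSet.mpr hax, a, by simp, x, by simp, rfl⟩
  have hlt : (G.deleteEdges E0).edgeSet.ncard < n := by
    rw [SimpleGraph.edgeSet_deleteEdges, ← hn]
    refine Set.ncard_lt_ncard ⟨Set.diff_subset, fun hsub => ?_⟩ (Set.toFinite _)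
    exact (hsub (G.mem_edgeSet.mpr hax)).2 hmem
  obtain ⟨c', hc', hr'⟩ := IH _ hlt _ rfl (maxdeg_delete hdeg E0)
  exact combine G E0 (chF a b w x y) (EZ_proper hAB hAinj hBinj)
    (EZ_close_of_norm hnorm) c' hc' hr'

lemma step3 [Fintype V] [DecidableEq V] {G : SimpleGraph V} {n : ℕ}
    (hdeg : MaxDegreeLE G 3) (hn : G.edgeSet.ncard = n)
    {a b w x y z : V}
    (hab : a ≠ b) (hwa : w ≠ a) (hwb : w ≠ b)
    (hxy : x ≠ y) (hxz : x ≠ z) (hyz : y ≠ z)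
    (hax : G.Adj a x) (hay : G.Adj a y) (haz : G.Adj a z)
    (hbx : G.Adj b x) (hby : G.Adj b y) (hbz : G.Adj b z)
    (hwx : G.Adj w x) (hwy : G.Adj w y)
    (IH : ∀ m < n, ∀ H : SimpleGraph V, H.edgeSet.ncard = m → MaxDegreeLE H 3 →
      ∃ c : Sym2 V → ℕ, IsProperEdgeColoring H c ∧
        ¬ HasRainbowCopy H c (SimpleGraph.cycleGraph 4)) :
    ∃ c : Sym2 V → ℕ, IsProperEdgeColoring G c ∧
      ¬ HasRainbowCopy G c (SimpleGraph.cycleGraph 4) := by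
  have hzw : z ≠ w := by
    intro h
    rw [← h] at hwx hwy
    exact four_nbrs hdeg haz.symm hbz.symm hwx hwy hab (hax.ne) (hay.ne) (hbx.ne) (hby.ne) hxy
  have va : ell a b w x y a = 0 := by simp [ell]
  have vb : ell a b w x y b = 1 := by simp [ell, Ne.symm hab]
  have vw : ell a b w x y w = 2 := by simp [ell, hwa, hwb]
  have vx : ell a b w x y x = 0 := by simp [ell, hax.ne', hbx.ne', hwx.ne']
  have vy : ell a b w x y y = 1 := by simp [ell, hay.ne', hby.ne', hwy.ne', Ne.symm hxy]
  have vz : ell a b w x y z = 2 := by simp [ell, haz.ne', hbz.ne', hzw, Ne.symm hxz, Ne.symm hyz]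
  refine step_s12 hdeg hn hax ?_ ?_ ?_
    (norm3 hdeg hab hwa hwb hxy hxz hyz hax hay haz hbx hby hbz hwx hwy) IH
  · intro p hp q hq
    simp only [Set.mem_insert_iff, Set.mem_singleton_iff] at hp hq
    rcases hp with rfl | rfl | rfl <;> rcases hq with rfl | rfl | rfl
    · exact hax.ne
    · exact hay.ne
    · exact haz.ne
    · exact hbx.ne
    · exact hby.ne
    · exact hbz.ne
    · exact hwx.ne
    · exact hwy.ne
    · exact Ne.symm hzw
  · intro p hp p' hp' hpp'
    simp only [Set.mem_insert_iff, Set.mem_singleton_iff] at hp hp'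
    rcases hp with rfl | rfl | rfl <;> rcases hp' with rfl | rfl | rfl <;>
      simp only [va, vb, vw] <;> first | exact absurd rfl hpp' | decide
  · intro q hq q' hq' hqq'
    simp only [Set.mem_insert_iff, Set.mem_singleton_iff] at hq hq'
    rcases hq with rfl | rfl | rfl <;> rcases hq' with rfl | rfl | rfl <;>
      simp only [vx, vy, vz] <;> first | exact absurd rfl hqq' | decide

lemma step2 [Fintype V] [DecidableEq V] {G : SimpleGraph V} {n : ℕ}
    (hdeg : MaxDegreeLE G 3) (hn : G.edgeSet.ncard = n)
    {a b x y z : V}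
    (hab : a ≠ b)
    (hxy : x ≠ y) (hxz : x ≠ z) (hyz : y ≠ z)
    (hax : G.Adj a x) (hay : G.Adj a y) (haz : G.Adj a z)
    (hbx : G.Adj b x) (hby : G.Adj b y) (hbz : G.Adj b z)
    (hno : ∀ v, v ≠ a → v ≠ b →
      ¬(G.Adj v x ∧ G.Adj v y) ∧ ¬(G.Adj v x ∧ G.Adj v z) ∧ ¬(G.Adj v y ∧ G.Adj v z))
    (IH : ∀ m < n, ∀ H : SimpleGraph V, H.edgeSet.ncard = m → MaxDegreeLE H 3 →
      ∃ c : Sym2 V → ℕ, IsProperEdgeColoring H c ∧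
        ¬ HasRainbowCopy H c (SimpleGraph.cycleGraph 4)) :
    ∃ c : Sym2 V → ℕ, IsProperEdgeColoring G c ∧
      ¬ HasRainbowCopy G c (SimpleGraph.cycleGraph 4) := by
  have va : ell a b b x y a = 0 := by simp [ell]
  have vb : ell a b b x y b = 1 := by simp [ell, Ne.symm hab]
  have vx : ell a b b x y x = 0 := by simp [ell, hax.ne', hbx.ne']
  have vy : ell a b b x y y = 1 := by simp [ell, hay.ne', hby.ne', Ne.symm hxy]
  have vz : ell a b b x y z = 2 := by simp [ell, haz.ne', hbz.ne', Ne.symm hxz, Ne.symm hyz]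
  refine step_s12 hdeg hn hax ?_ ?_ ?_
    (norm2 hdeg hxy hxz hyz hax hay haz hbx hby hbz hno) IH
  · intro p hp q hq
    simp only [Set.mem_insert_iff, Set.mem_singleton_iff] at hp hq
    rcases hp with rfl | rfl | rfl <;> rcases hq with rfl | rfl | rfl
    · exact hax.ne
    · exact hay.ne
    · exact haz.ne
    · exact hbx.ne
    · exact hby.ne
    · exact hbz.ne
    · exact hbx.ne
    · exact hby.ne
    · exact hbz.ne
  · intro p hp p' hp' hpp'
    simp only [Set.mem_insert_iff, Set.mem_singleton_iff] at hp hp'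
    rcases hp with rfl | rfl | rfl <;> rcases hp' with rfl | rfl | rfl <;>
      simp only [va, vb] <;> first | exact absurd rfl hpp' | decide
  · intro q hq q' hq' hqq'
    simp only [Set.mem_insert_iff, Set.mem_singleton_iff] at hq hq'
    rcases hq with rfl | rfl | rfl <;> rcases hq' with rfl | rfl | rfl <;>
      simp only [vx, vy, vz] <;> first | exact absurd rfl hqq' | decide

lemma main_thm [Fintype V] : ∀ (n : ℕ) (G : SimpleGraph V), G.edgeSet.ncard = n →
    MaxDegreeLE G 3 →
    ∃ c : Sym2 V → ℕ, IsProperEdgeColoring G c ∧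
      ¬ HasRainbowCopy G c (SimpleGraph.cycleGraph 4) := by
  intro n
  induction n using Nat.strong_induction_on with
  | _ n IH =>
  intro G hn hdeg
  classical
  by_cases hK : HasK23 G
  · obtain ⟨a, b, x, y, z, hab, hxy, hxz, hyz, hax, hay, haz, hbx, hby, hbz⟩ := hK
    by_cases hw : ∃ w, w ≠ a ∧ w ≠ b ∧
        ((G.Adj w x ∧ G.Adj w y) ∨ (G.Adj w x ∧ G.Adj w z) ∨ (G.Adj w y ∧ G.Adj w z))
    · obtain ⟨w, hwa, hwb, hwadj⟩ := hw
      rcases hwadj with ⟨hw1, hw2⟩ | ⟨hw1, hw2⟩ | ⟨hw1, hw2⟩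
      · exact step3 hdeg hn hab hwa hwb hxy hxz hyz hax hay haz hbx hby hbz hw1 hw2 IH
      · exact step3 hdeg hn hab hwa hwb hxz hxy (Ne.symm hyz) hax haz hay hbx hbz hby hw1 hw2 IH
      · exact step3 hdeg hn hab hwa hwb hyz (Ne.symm hxy) (Ne.symm hxz)
          hay haz hax hby hbz hbx hw1 hw2 IH
    · push_neg at hw
      refine step2 hdeg hn hab hxy hxz hyz hax hay haz hbx hby hbz ?_ IH
      intro v hva hvb
      have := hw v hva hvb
      tauto
  · exact nice_coloring G hdeg hK
end Chains

theorem stmt_12 {V : Type} [Fintype V] (G : SimpleGraph V) (h : MaxDegreeLE G 3) :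
    ∃ c : Sym2 V → ℕ, IsProperEdgeColoring G c ∧
      ¬ HasRainbowCopy G c (SimpleGraph.cycleGraph 4) := by
  exact main_thm G.edgeSet.ncard G rfl h
end

section
/- Let G be a 3-regular graph, let M be a perfect matching of G, and let v_0 v_1 … v_{2k} v_0 be a cycle of odd length 2k+1 in the graph G − M obtained from G by deleting the edges of M. Then there exists an index i (with indices taken modulo 2k+1) such that the edge v_i v_{i+1} is free, i.e., none of the three pairs v_{i−2} v_{i+1}, v_{i−1} v_{i+2}, v_i v_{i+3} is an edge of M. -/
open SimpleGraph

theorem stmt_13 {V : Type} [Fintype V] (G : SimpleGraph V)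
    (hreg : ∀ v, (G.neighborSet v).ncard = 3)
    (M : SimpleGraph V) (hMG : M ≤ G) (hPM : ∀ v : V, ∃! w, M.Adj v w)
    (k : ℕ) (hk : 1 ≤ k) (v : ZMod (2 * k + 1) → V) (hinj : Function.Injective v)
    (hcyc : ∀ i, G.Adj (v i) (v (i + 1)) ∧ ¬ M.Adj (v i) (v (i + 1))) :
    ∃ i : ZMod (2 * k + 1),
      ¬ M.Adj (v (i - 2)) (v (i + 1)) ∧ ¬ M.Adj (v (i - 1)) (v (i + 2)) ∧
      ¬ M.Adj (v i) (v (i + 3)) := by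
  by_contra hcon
  push_neg at hcon
  -- `c i` will mean `M.Adj (v i) (v (i + 3))`
  have window : ∀ i : ZMod (2 * k + 1),
      M.Adj (v (i - 2)) (v (i - 2 + 3)) ∨ M.Adj (v (i - 1)) (v (i - 1 + 3)) ∨
      M.Adj (v i) (v (i + 3)) := by
    intro i
    have h := hcon i
    by_cases h1 : M.Adj (v (i - 2)) (v (i + 1))
    · left; rwa [show i - 2 + 3 = i + 1 by ring]
    by_cases h2 : M.Adj (v (i - 1)) (v (i + 2))
    · right; left; rwa [show i - 1 + 3 = i + 2 by ring]
    · right; right; tauto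
  have key : ∀ i : ZMod (2 * k + 1), M.Adj (v i) (v (i + 3)) →
      M.Adj (v (i + 3)) (v (i + 3 + 3)) → False := by
    intro i h1 h2
    obtain ⟨w, hw, huniq⟩ := hPM (v (i + 3))
    have e1 := huniq (v i) h1.symm
    have e2 := huniq (v (i + 3 + 3)) h2
    have heq : i = i + 3 + 3 := hinj (e1.trans e2.symm)
    have h6 : ((6 : ℕ) : ZMod (2 * k + 1)) = 0 := by
      have : i = i + 6 := by linear_combination heq
      have := (left_eq_add).mp this
      push_cast
      exact this
    have hdvd : (2 * k + 1) ∣ 6 := (ZMod.natCast_eq_zero_iff 6 (2 * k + 1)).mp h6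
    have hle : 2 * k + 1 ≤ 6 := Nat.le_of_dvd (by norm_num) hdvd
    have hk1 : k = 1 := by
      have hub : k ≤ 2 := by omega
      interval_cases k
      · rfl
      · norm_num at hdvd
    subst hk1
    have h30 : (3 : ZMod (2 * 1 + 1)) = 0 := by decide
    rw [h30, add_zero] at h1
    exact M.irrefl h1
  have step : ∀ i : ZMod (2 * k + 1), M.Adj (v i) (v (i + 3)) →
      M.Adj (v (i + 2)) (v (i + 2 + 3)) := by
    intro i h
    rcases window (i + 3) with h1 | h1 | h1
    · have h1' : M.Adj (v (i + 1)) (v (i + 1 + 3)) := by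
        rw [show i + 1 = i + 3 - 2 by ring]
        exact h1
      rcases window (i + 4) with h2 | h2 | h2
      · rw [show i + 2 = i + 4 - 2 by ring]
        exact h2
      · exact absurd h (fun h => key i h (by
          rw [show i + 3 + 3 = i + 4 - 1 + 3 by ring]
          rwa [show i + 3 = i + 4 - 1 by ring]))
      · exact absurd h1' (fun h1' => key (i + 1) h1' (by
          rw [show i + 1 + 3 + 3 = i + 4 + 3 by ring]
          rwa [show i + 1 + 3 = i + 4 by ring]))
    · rw [show i + 2 = i + 3 - 1 by ring]
      exact h1
    · exact (key i h h1).elim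
  obtain ⟨i0, hi0⟩ : ∃ i0 : ZMod (2 * k + 1), M.Adj (v i0) (v (i0 + 3)) := by
    rcases window 2 with h | h | h
    exacts [⟨2 - 2, h⟩, ⟨2 - 1, h⟩, ⟨2, h⟩]
  have all : ∀ m : ℕ, M.Adj (v (i0 + 2 * (m : ZMod (2 * k + 1))))
      (v (i0 + 2 * (m : ZMod (2 * k + 1)) + 3)) := by
    intro m
    induction m with
    | zero => simpa using hi0
    | succ m ih =>
      have e : ((m + 1 : ℕ) : ZMod (2 * k + 1)) = (m : ZMod (2 * k + 1)) + 1 := by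
        push_cast; ring
      rw [e, show i0 + 2 * ((m : ZMod (2 * k + 1)) + 1)
          = i0 + 2 * (m : ZMod (2 * k + 1)) + 2 by ring]
      exact step _ ih
  have h2u : IsUnit (2 : ZMod (2 * k + 1)) := by
    have hco : Nat.Coprime 2 (2 * k + 1) := by
      rw [Nat.coprime_two_left]
      exact ⟨k, rfl⟩
    have := (ZMod.isUnit_iff_coprime 2 (2 * k + 1)).mpr hco
    simpa using this
  obtain ⟨u, hu⟩ := h2u
  have everywhere : ∀ j : ZMod (2 * k + 1), M.Adj (v j) (v (j + 3)) := by
    intro j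
    have hmc : i0 + 2 * ((((((u⁻¹ : (ZMod (2 * k + 1))ˣ) : ZMod (2 * k + 1)) * (j - i0)).val : ℕ)) : ZMod (2 * k + 1)) = j := by
      rw [ZMod.natCast_val, ZMod.cast_id, ← hu, ← mul_assoc, Units.mul_inv]
      ring
    have := all ((((u⁻¹ : (ZMod (2 * k + 1))ˣ) : ZMod (2 * k + 1)) * (j - i0)).val)
    rwa [hmc] at this
  exact key 0 (everywhere 0) (by rw [zero_add]; exact everywhere 3)
end

section
/- Every proper edge colouring of the graph G_{5,3} yields a rainbow copy of the cycle C_5 on 5 vertices; consequently AR_d(C_5) ≤ 6. -/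
open SimpleGraph

/-- The simple graph generated by symmetrising a relation and removing loops. -/
def graphFromRel {V : Type*} (r : V → V → Prop) : SimpleGraph V where
  Adj a b := a ≠ b ∧ (r a b ∨ r b a)
  symm := ⟨fun a b ⟨hne, h⟩ => ⟨hne.symm, h.symm⟩⟩
  loopless := ⟨fun _ ⟨hne, _⟩ => hne rfl⟩

/-- The graph `G_{2k-1,d}`: vertices `u_a` (`a : Fin k`) and `v_{i,j}`
(`(i,j) : Fin (k-1) × Fin d`), with `v_{i,j}` adjacent to `u_i` and `u_{i+1}`,
together with the edge `u_{k-1} u_0`. -/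
def GOdd (k d : ℕ) : SimpleGraph (Fin k ⊕ Fin (k - 1) × Fin d) :=
  graphFromRel (fun a b =>
    match a, b with
    | Sum.inl a, Sum.inr (i, j) => (a : ℕ) = (i : ℕ) ∨ (a : ℕ) = (i : ℕ) + 1
    | Sum.inl a, Sum.inl b => (a : ℕ) = k - 1 ∧ (b : ℕ) = 0
    | _, _ => False)


section AuxAntiRamsey

lemma sdr3' {p q r : Fin 3 → Prop} (H : ∀ j, p j ∨ q j ∨ r j)
    (hp : ∀ i j, p i → p j → i = j) (hq : ∀ i j, q i → q j → i = j)
    (hr : ∀ i j, r i → r j → i = j) :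
    ∃ x y z : Fin 3, x ≠ y ∧ x ≠ z ∧ y ≠ z ∧ p x ∧ q y ∧ r z := by
  rcases H 0 with h0|h0|h0 <;> rcases H 1 with h1|h1|h1 <;> rcases H 2 with h2|h2|h2
  all_goals first
    | exact absurd (hp _ _ h0 h1) (by decide)
    | exact absurd (hp _ _ h0 h2) (by decide)
    | exact absurd (hp _ _ h1 h2) (by decide)
    | exact absurd (hq _ _ h0 h1) (by decide)
    | exact absurd (hq _ _ h0 h2) (by decide)
    | exact absurd (hq _ _ h1 h2) (by decide)
    | exact absurd (hr _ _ h0 h1) (by decide)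
    | exact absurd (hr _ _ h0 h2) (by decide)
    | exact absurd (hr _ _ h1 h2) (by decide)
    | exact ⟨0, 1, 2, by decide, by decide, by decide, h0, h1, h2⟩
    | exact ⟨0, 2, 1, by decide, by decide, by decide, h0, h2, h1⟩
    | exact ⟨1, 0, 2, by decide, by decide, by decide, h1, h0, h2⟩
    | exact ⟨1, 2, 0, by decide, by decide, by decide, h1, h2, h0⟩
    | exact ⟨2, 0, 1, by decide, by decide, by decide, h2, h0, h1⟩
    | exact ⟨2, 1, 0, by decide, by decide, by decide, h2, h1, h0⟩

set_option synthInstance.maxSize 400 in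
lemma fin3comb' : ∀ x1 y1 z1 x2 y2 z2 : Fin 3, x1≠y1 → x1≠z1 → y1≠z1 → x2≠y2 → x2≠z2 → y2≠z2 →
    x1≠x2 → y1≠y2 → z1≠z2 → (y1 = x2 ∨ y2 = x1) := by decide

lemma core3' {α : Type*} (a b d e : Fin 3 → α) (f : α)
    (ha : Function.Injective a) (hb : Function.Injective b)
    (hd : Function.Injective d) (he : Function.Injective e)
    (hbd : ∀ j k, b j ≠ d k)
    (hBf : ∀ j, b j ≠ f) :
    ∃ j k, b j ≠ f ∧ d k ≠ f ∧ a j ≠ d k ∧ a j ≠ e k ∧ b j ≠ e k := by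
  by_contra hcon
  push_neg at hcon
  have H : ∀ j k, d k ≠ f → (a j = d k ∨ a j = e k ∨ b j = e k) := by
    intro j k hk
    by_cases h1 : a j = d k
    · exact Or.inl h1
    by_cases h2 : a j = e k
    · exact Or.inr (Or.inl h2)
    exact Or.inr (Or.inr (hcon j k (hBf j) hk h1 h2))
  obtain ⟨k1, k2, hk12, hdk1, hdk2⟩ : ∃ k1 k2 : Fin 3, k1 ≠ k2 ∧ d k1 ≠ f ∧ d k2 ≠ f := by
    by_cases h0 : d 0 = f
    · exact ⟨1, 2, by decide,
        fun h => absurd (hd (h.trans h0.symm)) (by decide),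
        fun h => absurd (hd (h.trans h0.symm)) (by decide)⟩
    · by_cases h1 : d 1 = f
      · exact ⟨0, 2, by decide, h0, fun h => absurd (hd (h.trans h1.symm)) (by decide)⟩
      · exact ⟨0, 1, by decide, h0, h1⟩
  obtain ⟨x1, y1, z1, hxy1, hxz1, hyz1, hx1, hy1, hz1⟩ :=
    sdr3' (p := fun j => a j = d k1) (q := fun j => a j = e k1) (r := fun j => b j = e k1)
      (fun j => H j k1 hdk1)
      (fun i j hi hj => ha (hi.trans hj.symm))
      (fun i j hi hj => ha (hi.trans hj.symm))
      (fun i j hi hj => hb (hi.trans hj.symm))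
  obtain ⟨x2, y2, z2, hxy2, hxz2, hyz2, hx2, hy2, hz2⟩ :=
    sdr3' (p := fun j => a j = d k2) (q := fun j => a j = e k2) (r := fun j => b j = e k2)
      (fun j => H j k2 hdk2)
      (fun i j hi hj => ha (hi.trans hj.symm))
      (fun i j hi hj => ha (hi.trans hj.symm))
      (fun i j hi hj => hb (hi.trans hj.symm))
  have hxx : x1 ≠ x2 := fun h => hk12 (hd ((h ▸ hx1).symm.trans hx2))
  have hyy : y1 ≠ y2 := fun h => hk12 (he ((h ▸ hy1).symm.trans hy2))
  have hzz : z1 ≠ z2 := fun h => hk12 (he ((h ▸ hz1).symm.trans hz2))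
  rcases fin3comb' x1 y1 z1 x2 y2 z2 hxy1 hxz1 hyz1 hxy2 hxz2 hyz2 hxx hyy hzz with h | h
  · exact hbd z1 k2 (hz1.trans ((h ▸ hy1).symm.trans hx2))
  · exact hbd z2 k1 (hz2.trans ((h ▸ hy2).symm.trans hx1))

lemma core' {α : Type*} (a b d e : Fin 3 → α) (f : α)
    (ha : Function.Injective a) (hb : Function.Injective b)
    (hd : Function.Injective d) (he : Function.Injective e)
    (hbd : ∀ j k, b j ≠ d k) (hab : ∀ j, a j ≠ b j) (hde : ∀ k, d k ≠ e k) :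
    ∃ j k, b j ≠ f ∧ d k ≠ f ∧ a j ≠ d k ∧ a j ≠ e k ∧ b j ≠ e k := by
  by_cases hB : ∀ j, b j ≠ f
  · exact core3' a b d e f ha hb hd he hbd hB
  · push_neg at hB
    obtain ⟨j0, hj0⟩ := hB
    have hDf : ∀ k, d k ≠ f := fun k h => hbd j0 k (hj0.trans h.symm)
    obtain ⟨j, k, h1, h2, h3, h4, h5⟩ :=
      core3' e d b a f he hd hb ha
        (fun j k h => hbd k j h.symm)
        hDf
    exact ⟨k, j, h2, h1, h5.symm, h4.symm, h3.symm⟩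

abbrev VG := Fin 3 ⊕ Fin 2 × Fin 3

/-- helper: distinct colours at a shared vertex -/
lemma proper_ne {V : Type*} {G : SimpleGraph V} {c : Sym2 V → ℕ}
    (h : IsProperEdgeColoring G c) {x y z : V}
    (h1 : G.Adj x y) (h2 : G.Adj x z) (hyz : y ≠ z) :
    c s(x, y) ≠ c s(x, z) := by
  apply h _ (G.mem_edgeSet.2 h1) _ (G.mem_edgeSet.2 h2) _
    ⟨x, Sym2.mem_mk_left x y, Sym2.mem_mk_left x z⟩
  intro he
  rcases Sym2.eq_iff.1 he with ⟨-, h'⟩ | ⟨h1', -⟩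
  · exact hyz h'
  · exact G.loopless.irrefl z (h1' ▸ h2)

lemma forcesGOdd : ForcesRainbow (GOdd 3 3) (SimpleGraph.cycleGraph 5) := by
  intro c hc
  have adjA : ∀ j : Fin 3, (GOdd 3 3).Adj (Sum.inl 0) (Sum.inr (0, j)) :=
    fun j => ⟨Sum.inl_ne_inr, Or.inl (Or.inl (by decide))⟩
  have adjB : ∀ j : Fin 3, (GOdd 3 3).Adj (Sum.inl 1) (Sum.inr (0, j)) :=
    fun j => ⟨Sum.inl_ne_inr, Or.inl (Or.inr (by decide))⟩
  have adjD : ∀ k : Fin 3, (GOdd 3 3).Adj (Sum.inl 1) (Sum.inr (1, k)) :=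
    fun k => ⟨Sum.inl_ne_inr, Or.inl (Or.inl (by decide))⟩
  have adjE : ∀ k : Fin 3, (GOdd 3 3).Adj (Sum.inl 2) (Sum.inr (1, k)) :=
    fun k => ⟨Sum.inl_ne_inr, Or.inl (Or.inr (by decide))⟩
  have adjF : (GOdd 3 3).Adj (Sum.inl 2) (Sum.inl 0) :=
    ⟨by simp, Or.inl ⟨by decide, by decide⟩⟩
  have swapc : ∀ x y : VG, c s(x, y) = c s(y, x) := fun x y => by rw [Sym2.eq_swap]
  set A : Fin 3 → ℕ := fun j => c s(Sum.inl 0, Sum.inr (0, j)) with hA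
  set B : Fin 3 → ℕ := fun j => c s(Sum.inl 1, Sum.inr (0, j)) with hB
  set D : Fin 3 → ℕ := fun k => c s(Sum.inl 1, Sum.inr (1, k)) with hD
  set E : Fin 3 → ℕ := fun k => c s(Sum.inl 2, Sum.inr (1, k)) with hE
  set F : ℕ := c s(Sum.inl 2, Sum.inl 0) with hF
  have injA : Function.Injective A := by
    intro j j' h
    by_contra hne
    exact proper_ne hc (adjA j) (adjA j') (by simp [hne]) h
  have injB : Function.Injective B := by
    intro j j' h
    by_contra hne
    exact proper_ne hc (adjB j) (adjB j') (by simp [hne]) h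
  have injD : Function.Injective D := by
    intro j j' h
    by_contra hne
    exact proper_ne hc (adjD j) (adjD j') (by simp [hne]) h
  have injE : Function.Injective E := by
    intro j j' h
    by_contra hne
    exact proper_ne hc (adjE j) (adjE j') (by simp [hne]) h
  have hBD : ∀ j k, B j ≠ D k := fun j k =>
    proper_ne hc (adjB j) (adjD k) (by simp)
  have hAB : ∀ j, A j ≠ B j := by
    intro j
    have h := proper_ne hc (adjA j).symm (adjB j).symm
      (by simp : (Sum.inl 0 : VG) ≠ Sum.inl 1)
    rw [hA, hB]
    simp only
    rw [swapc (Sum.inl 0) (Sum.inr (0,j)), swapc (Sum.inl 1) (Sum.inr (0,j))]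
    exact h
  have hDE : ∀ k, D k ≠ E k := by
    intro k
    have h := proper_ne hc (adjD k).symm (adjE k).symm
      (by simp : (Sum.inl 1 : VG) ≠ Sum.inl 2)
    rw [hD, hE]
    simp only
    rw [swapc (Sum.inl 1) (Sum.inr (1,k)), swapc (Sum.inl 2) (Sum.inr (1,k))]
    exact h
  have hAF : ∀ j, A j ≠ F := by
    intro j
    have h := proper_ne hc (adjA j) adjF.symm
      (by simp : (Sum.inr (0,j) : VG) ≠ Sum.inl 2)
    rw [hA, hF]
    simp only
    rw [swapc (Sum.inl 2) (Sum.inl 0)]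
    exact h
  have hEF : ∀ k, E k ≠ F := fun k =>
    proper_ne hc (adjE k) adjF (by simp)
  obtain ⟨j, k, hBF, hDF, hAD, hAE, hBE⟩ :=
    core' A B D E F injA injB injD injE hBD hAB hDE
  refine ⟨⟨fun x => match x with
    | 0 => Sum.inl 0 | 1 => Sum.inr (0, j) | 2 => Sum.inl 1
    | 3 => Sum.inr (1, k) | 4 => Sum.inl 2, ?_⟩, ?_, ?_⟩
  · intro x y hxy
    fin_cases x <;> fin_cases y <;> first | rfl | (exact absurd hxy (by simp))
  · intro x y hxy
    fin_cases x <;> fin_cases y <;>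
      first
        | exact absurd hxy (by decide)
        | exact adjA j | exact (adjA j).symm
        | exact (adjB j).symm | exact adjB j
        | exact adjD k | exact (adjD k).symm
        | exact (adjE k).symm | exact adjE k
        | exact adjF | exact adjF.symm
  · have hedge : ∀ u v : Fin 5, (SimpleGraph.cycleGraph 5).Adj u v →
        s(u,v) = s(0,1) ∨ s(u,v) = s(1,2) ∨ s(u,v) = s(2,3) ∨ s(u,v) = s(3,4) ∨
          s(u,v) = s(4,0) := by decide
    intro u v x y huv hxy hne
    set fm : Fin 5 → VG := fun x => match x with
      | 0 => Sum.inl 0 | 1 => Sum.inr (0, j) | 2 => Sum.inl 1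
      | 3 => Sum.inr (1, k) | 4 => Sum.inl 2 with hfm
    show c s(fm u, fm v) ≠ c s(fm x, fm y)
    have hmap : ∀ u v x' y' : Fin 5, s(u,v) = s(x',y') → s(fm u, fm v) = s(fm x', fm y') := by
      intro u v x' y' h
      have := congrArg (Sym2.map fm) h
      simpa only [Sym2.map_pair_eq] using this
    have d01 : c s(fm 0, fm 1) = A j := rfl
    have d12 : c s(fm 1, fm 2) = B j := swapc _ _
    have d23 : c s(fm 2, fm 3) = D k := rfl
    have d34 : c s(fm 3, fm 4) = E k := swapc _ _
    have d40 : c s(fm 4, fm 0) = F := rfl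
    rcases hedge u v huv with h1|h1|h1|h1|h1 <;> rcases hedge x y hxy with h2|h2|h2|h2|h2 <;>
      rw [hmap _ _ _ _ h1, hmap _ _ _ _ h2] <;>
      first
        | exact absurd (h1.trans h2.symm) hne
        | (rw [d01, d12]; exact hAB j) | (rw [d12, d01]; exact (hAB j).symm)
        | (rw [d01, d23]; exact hAD)   | (rw [d23, d01]; exact hAD.symm)
        | (rw [d01, d34]; exact hAE)   | (rw [d34, d01]; exact hAE.symm)
        | (rw [d01, d40]; exact hAF j) | (rw [d40, d01]; exact (hAF j).symm)
        | (rw [d12, d23]; exact hBD j k) | (rw [d23, d12]; exact (hBD j k).symm)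
        | (rw [d12, d34]; exact hBE)   | (rw [d34, d12]; exact hBE.symm)
        | (rw [d12, d40]; exact hBF)   | (rw [d40, d12]; exact hBF.symm)
        | (rw [d23, d34]; exact hDE k) | (rw [d34, d23]; exact (hDE k).symm)
        | (rw [d23, d40]; exact hDF)   | (rw [d40, d23]; exact hDF.symm)
        | (rw [d34, d40]; exact hEF k) | (rw [d40, d34]; exact (hEF k).symm)

instance godddec : DecidableRel (GOdd 3 3).Adj := fun a b =>
  match a, b with
  | Sum.inl a, Sum.inl b => decidable_of_iff
      (Sum.inl a ≠ (Sum.inl b : VG) ∧ (((a:ℕ) = 2 ∧ (b:ℕ) = 0) ∨ ((b:ℕ) = 2 ∧ (a:ℕ) = 0))) Iff.rfl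
  | Sum.inl a, Sum.inr (i, j) => decidable_of_iff
      (Sum.inl a ≠ (Sum.inr (i,j) : VG) ∧ (((a:ℕ) = (i:ℕ) ∨ (a:ℕ) = (i:ℕ)+1) ∨ False)) Iff.rfl
  | Sum.inr (i, j), Sum.inl a => decidable_of_iff
      ((Sum.inr (i,j) : VG) ≠ Sum.inl a ∧ (False ∨ ((a:ℕ) = (i:ℕ) ∨ (a:ℕ) = (i:ℕ)+1))) Iff.rfl
  | Sum.inr (i, j), Sum.inr (i', j') => decidable_of_iff
      ((Sum.inr (i,j) : VG) ≠ Sum.inr (i',j') ∧ (False ∨ False)) Iff.rfl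

def ψ : Fin 9 → VG := fun x => match x with
 | 0 => .inl 0 | 1 => .inl 1 | 2 => .inl 2
 | 3 => .inr (0,0) | 4 => .inr (0,1) | 5 => .inr (0,2)
 | 6 => .inr (1,0) | 7 => .inr (1,1) | 8 => .inr (1,2)

def φ : VG → Fin 9 := fun v => match v with
 | .inl a => ⟨a.val, by omega⟩
 | .inr (i, j) => ⟨3 + 3 * i.val + j.val, by omega⟩

lemma hψφ : ∀ v, ψ (φ v) = v := by decide

lemma phi_inj : Function.Injective φ := fun a b h => by
  rw [← hψφ a, ← hψφ b, h]

def G9 : SimpleGraph (Fin 9) := (GOdd 3 3).comap ψ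

instance : DecidableRel G9.Adj := fun a b => godddec (ψ a) (ψ b)

lemma maxdegG9 : MaxDegreeLE G9 6 := by
  intro v
  rw [Set.ncard_eq_toFinset_card']
  fin_cases v <;> decide

lemma forcesG9 : ForcesRainbow G9 (SimpleGraph.cycleGraph 5) := by
  intro c hcol
  have hmem : ∀ e ∈ (GOdd 3 3).edgeSet, Sym2.map φ e ∈ G9.edgeSet := by
    intro e he
    induction e using Sym2.ind with
    | _ x y =>
      rw [SimpleGraph.mem_edgeSet] at he
      rw [Sym2.map_pair_eq, SimpleGraph.mem_edgeSet]
      show (GOdd 3 3).Adj (ψ (φ x)) (ψ (φ y))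
      rwa [hψφ, hψφ]
  have hC' : IsProperEdgeColoring (GOdd 3 3) (fun e => c (e.map φ)) := by
    intro e1 he1 e2 he2 hne hsh
    refine hcol _ (hmem e1 he1) _ (hmem e2 he2)
      (fun h => hne (Sym2.map.injective phi_inj h)) ?_
    obtain ⟨v, hv1, hv2⟩ := hsh
    exact ⟨φ v, Sym2.mem_map.2 ⟨v, hv1, rfl⟩, Sym2.mem_map.2 ⟨v, hv2, rfl⟩⟩
  obtain ⟨f, hadj, hrb⟩ := forcesGOdd _ hC'
  refine ⟨⟨φ ∘ f, phi_inj.comp f.injective⟩, ?_, ?_⟩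
  · intro u v h
    show (GOdd 3 3).Adj (ψ (φ (f u))) (ψ (φ (f v)))
    rw [hψφ, hψφ]
    exact hadj u v h
  · intro u v x y h1 h2 hne
    have := hrb u v x y h1 h2 hne
    simpa only [Function.Embedding.coeFn_mk, Function.comp_apply, Sym2.map_pair_eq] using this

end AuxAntiRamsey

theorem stmt_14 :
    ForcesRainbow (GOdd 3 3) (SimpleGraph.cycleGraph 5) ∧
    ∃ (n : ℕ) (G : SimpleGraph (Fin n)),
      MaxDegreeLE G 6 ∧ ForcesRainbow G (SimpleGraph.cycleGraph 5) := by
  exact ⟨forcesGOdd, 9, G9, maxdegG9, forcesG9⟩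
end

section
/- For every positive integer r, let n = 3^{r−1} + 1. Then there exists a proper edge colouring of the complete bipartite graph K_{3^r,3^r} with no rainbow copy of the complete bipartite graph K_{2,n}. (Explicitly: identify each part of K_{3^r,3^r} with the vector space (Z_3)^r and colour the edge between u in the first part and v in the second part by u − v ∈ (Z_3)^r; this colouring is proper and contains no rainbow K_{2,n}.) -/
open SimpleGraph

lemma key_lemma_s16 (r : ℕ) (d : Fin r → ZMod 3) (hd : d ≠ 0)
    (p : Fin (3 ^ (r - 1) + 1) → Fin r → ZMod 3)
    (hinj : Function.Injective p)
    (hpq : ∀ j k, p j ≠ p k - d) : False := by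
  obtain ⟨i, hi⟩ : ∃ i, d i ≠ 0 := by
    by_contra h; push_neg at h; exact hd (funext h)
  set ℓ : (Fin r → ZMod 3) → ZMod 3 := fun w => (d i)⁻¹ * w i with hℓ
  set ρ : (Fin r → ZMod 3) → (Fin r → ZMod 3) := fun w => w - (ℓ w) • d with hρ
  have hρi : ∀ w, ρ w i = 0 := by
    intro w
    simp only [hρ, hℓ, Pi.sub_apply, Pi.smul_apply, smul_eq_mul]
    field_simp
    ring
  have h3 : ∀ s : ZMod 3, s = 0 ∨ s = 1 ∨ s = 2 := by decide
  have h30 : (3 : ZMod 3) = 0 := by decide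
  set F : Fin (3 ^ (r - 1) + 1) → ({j : Fin r // j ≠ i} → ZMod 3) :=
    fun k s => ρ (p k) s.1 with hF
  have hFinj : Function.Injective F := by
    intro j k h
    have hρeq : ρ (p j) = ρ (p k) := by
      funext m
      by_cases hm : m = i
      · subst hm; rw [hρi, hρi]
      · exact congrFun h ⟨m, hm⟩
    have hpt : ∀ m, p j m - p k m = (ℓ (p j) - ℓ (p k)) * d m := by
      intro m
      have := congrFun hρeq m
      simp only [hρ, Pi.sub_apply, Pi.smul_apply, smul_eq_mul] at this
      linear_combination this
    rcases h3 (ℓ (p j) - ℓ (p k)) with ht | ht | ht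
    · apply hinj
      funext m
      have := hpt m; rw [ht] at this
      linear_combination this
    · exfalso
      apply hpq k j
      funext m
      have := hpt m; rw [ht] at this
      simp only [Pi.sub_apply]
      linear_combination -this
    · exfalso
      apply hpq j k
      funext m
      have := hpt m; rw [ht] at this
      simp only [Pi.sub_apply]
      linear_combination this + (h30 * d m)
  have hcard := Fintype.card_le_of_injective F hFinj
  have h1 : Fintype.card {j : Fin r // j ≠ i} = r - 1 := by
    have := Fintype.card_subtype_compl (fun j : Fin r => j = i)
    simp [Fintype.card_subtype_eq] at this
    simpa using this
  rw [Fintype.card_fun, h1, Fintype.card_fin, ZMod.card] at hcard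
  have : 0 < 3 ^ (r - 1) := Nat.pow_pos (by norm_num)
  omega

/-- The colour function on ordered pairs: `inl u — inr v` gets `u - v`. -/
def gcol (r : ℕ) : ((Fin r → ZMod 3) ⊕ (Fin r → ZMod 3)) →
    ((Fin r → ZMod 3) ⊕ (Fin r → ZMod 3)) → (Fin r → ZMod 3)
  | .inl u, .inr v => u - v
  | .inr v, .inl u => u - v
  | _, _ => 0

lemma gcol_symm (r : ℕ) : ∀ x y, gcol r x y = gcol r y x := by
  intro x y; cases x <;> cases y <;> rfl

/-- Edges of the complete bipartite graph have a canonical form. -/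
lemma edge_form {r : ℕ}
    (e : Sym2 ((Fin r → ZMod 3) ⊕ (Fin r → ZMod 3)))
    (he : e ∈ (completeBipartiteGraph (Fin r → ZMod 3) (Fin r → ZMod 3)).edgeSet) :
    ∃ u v, e = s(Sum.inl u, Sum.inr v) := by
  induction e using Sym2.ind with
  | _ a b =>
    rw [SimpleGraph.mem_edgeSet] at he
    rcases a with u | u <;> rcases b with v | v <;> simp at he
    · exact ⟨u, v, rfl⟩
    · exact ⟨v, u, Sym2.eq_swap⟩

theorem stmt_16 (r : ℕ) (hr : 1 ≤ r) :
    ∃ c : Sym2 ((Fin r → ZMod 3) ⊕ (Fin r → ZMod 3)) → (Fin r → ZMod 3),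
      IsProperEdgeColoring
        (completeBipartiteGraph (Fin r → ZMod 3) (Fin r → ZMod 3)) c ∧
      ¬ HasRainbowCopy
        (completeBipartiteGraph (Fin r → ZMod 3) (Fin r → ZMod 3)) c
        (completeBipartiteGraph (Fin 2) (Fin (3 ^ (r - 1) + 1))) := by
  refine ⟨Sym2.lift ⟨gcol r, gcol_symm r⟩, ?_, ?_⟩
  · -- properness
    intro e₁ he₁ e₂ he₂ hne ⟨x, hx1, hx2⟩
    obtain ⟨u₁, v₁, rfl⟩ := edge_form e₁ he₁
    obtain ⟨u₂, v₂, rfl⟩ := edge_form e₂ he₂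
    simp only [Sym2.lift_mk]
    show u₁ - v₁ ≠ u₂ - v₂
    have hx1' : x = Sum.inl u₁ ∨ x = Sum.inr v₁ := Sym2.mem_iff.mp hx1
    have hx2' : x = Sum.inl u₂ ∨ x = Sum.inr v₂ := Sym2.mem_iff.mp hx2
    have hne' : u₁ ≠ u₂ ∨ v₁ ≠ v₂ := by
      by_contra h
      push_neg at h
      exact hne (by rw [h.1, h.2])
    rcases hx1' with rfl | rfl <;> rcases hx2' with h2 | h2
    · have hu : u₁ = u₂ := by injection h2
      subst hu
      have hv : v₁ ≠ v₂ := by tauto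
      intro h
      exact hv (by linear_combination -h)
    · exact absurd h2 (by simp)
    · exact absurd h2 (by simp)
    · have hv : v₁ = v₂ := by injection h2
      subst hv
      have hu : u₁ ≠ u₂ := by tauto
      intro h
      exact hu (by linear_combination h)
  · -- no rainbow K_{2,n}
    rintro ⟨f, hadj, hcol⟩
    have hAdjH : ∀ (i : Fin 2) (j : Fin (3 ^ (r - 1) + 1)),
        (completeBipartiteGraph (Fin 2) (Fin (3 ^ (r - 1) + 1))).Adj
          (Sum.inl i) (Sum.inr j) := by intro i j; simp
    have hGadj : ∀ (i : Fin 2) (j : Fin (3 ^ (r - 1) + 1)),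
        (completeBipartiteGraph (Fin r → ZMod 3) (Fin r → ZMod 3)).Adj
          (f (Sum.inl i)) (f (Sum.inr j)) := fun i j => hadj _ _ (hAdjH i j)
    have hne01 : f (Sum.inl (0 : Fin 2)) ≠ f (Sum.inl (1 : Fin 2)) := by
      intro h
      have := f.injective h
      simp at this
    have hsne : ∀ (j k : Fin (3 ^ (r - 1) + 1)),
        s((Sum.inl (0 : Fin 2) : Fin 2 ⊕ Fin (3 ^ (r - 1) + 1)), Sum.inr j) ≠
        s((Sum.inl (1 : Fin 2) : Fin 2 ⊕ Fin (3 ^ (r - 1) + 1)), Sum.inr k) := by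
      intro j k h
      rw [Sym2.eq_iff] at h
      rcases h with ⟨h1, _⟩ | ⟨h1, _⟩ <;> simp at h1
    rcases hfa : f (Sum.inl (0 : Fin 2)) with a | a
    · -- f(inl 0) = inl a : all f(inr j) are inr
      have hv : ∀ j, ∃ vj, f (Sum.inr j) = Sum.inr vj := by
        intro j
        have := hGadj 0 j
        rw [hfa] at this
        rcases hw : f (Sum.inr j) with w | w
        · rw [hw] at this; simp at this
        · exact ⟨w, rfl⟩
      choose v hvv using hv
      obtain ⟨b, hfb⟩ : ∃ b, f (Sum.inl (1 : Fin 2)) = Sum.inl b := by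
        have := hGadj 1 0
        rw [hvv 0] at this
        rcases hw : f (Sum.inl 1) with w | w
        · exact ⟨w, rfl⟩
        · rw [hw] at this; simp at this
      have hab : a ≠ b := by
        intro h; apply hne01; rw [hfa, hfb, h]
      refine key_lemma_s16 r (a - b) (sub_ne_zero.mpr hab) (fun j => a - v j) ?_ ?_
      · intro j k h
        have hvjk : v j = v k := by linear_combination -h
        have : f (Sum.inr j) = f (Sum.inr k) := by rw [hvv j, hvv k, hvjk]
        have := f.injective this
        injection this
      · intro j k h
        have hc := hcol (Sum.inl 0) (Sum.inr j) (Sum.inl 1) (Sum.inr k)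
          (hAdjH 0 j) (hAdjH 1 k) (hsne j k)
        rw [hfa, hfb, hvv j, hvv k] at hc
        simp only [Sym2.lift_mk] at hc
        apply hc
        show a - v j = b - v k
        have : a - v j = (a - v k) - (a - b) := h
        linear_combination this
    · -- f(inl 0) = inr a : all f(inr j) are inl
      have hu : ∀ j, ∃ uj, f (Sum.inr j) = Sum.inl uj := by
        intro j
        have := hGadj 0 j
        rw [hfa] at this
        rcases hw : f (Sum.inr j) with w | w
        · exact ⟨w, rfl⟩
        · rw [hw] at this; simp at this
      choose u huu using hu
      obtain ⟨b, hfb⟩ : ∃ b, f (Sum.inl (1 : Fin 2)) = Sum.inr b := by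
        have := hGadj 1 0
        rw [huu 0] at this
        rcases hw : f (Sum.inl 1) with w | w
        · rw [hw] at this; simp at this
        · exact ⟨w, rfl⟩
      have hab : a ≠ b := by
        intro h; apply hne01; rw [hfa, hfb, h]
      refine key_lemma_s16 r (b - a) (sub_ne_zero.mpr (Ne.symm hab)) (fun j => u j - a) ?_ ?_
      · intro j k h
        have hujk : u j = u k := by linear_combination h
        have : f (Sum.inr j) = f (Sum.inr k) := by rw [huu j, huu k, hujk]
        have := f.injective this
        injection this
      · intro j k h
        have hc := hcol (Sum.inl 0) (Sum.inr j) (Sum.inl 1) (Sum.inr k)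
          (hAdjH 0 j) (hAdjH 1 k) (hsne j k)
        rw [hfa, hfb, huu j, huu k] at hc
        simp only [Sym2.lift_mk] at hc
        apply hc
        show u j - a = u k - b
        have : u j - a = (u k - a) - (b - a) := h
        linear_combination this
end
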